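/- arXiv:1308.1971 — 4 statements merged into one kernel-verified Lean document; each statement's English description precedes it below -/
import Mathlib

section
/- If a configuration C_0 satisfies Tree Initially, then there is no infinite sequence of configurations C_0, C_1, C_2, … in which each C_{t+1} is obtained from C_t by performing an applicable Add, Insert, Jump, LeafSwap, or MixSwap; in other words, every sequence of such updates terminates after finitely many steps. -/
namespace P2P

/-- A walk of length `n` from `r` to `u` in the edge set `E`. -/
def Walk {α : Type*} (E : Finset (α × α)) (r u : α) (n : ℕ) : Prop :=
  ∃ f : ℕ → α, f 0 = r ∧ f n = u ∧ ∀ k < n, (f k, f (k + 1)) ∈ E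

/-- Depth of `u` below root `r`: minimal number of edges of a directed walk
(equivalently, of a directed path) from `r` to `u`; `⊤` if unreachable. -/
noncomputable def depth {α : Type*} (E : Finset (α × α)) (r u : α) : ℕ∞ :=
  sInf {n : ℕ∞ | ∃ m : ℕ, n = (m : ℕ∞) ∧ Walk E r u m}

/-- Out-degree of `u` in `E`. -/
def outDeg {α : Type*} [DecidableEq α] (E : Finset (α × α)) (u : α) : ℕ :=
  (E.filter fun e => e.1 = u).card

/-- In-degree of `u` in `E`. -/
def inDeg {α : Type*} [DecidableEq α] (E : Finset (α × α)) (u : α) : ℕ :=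
  (E.filter fun e => e.2 = u).card

/-- A configuration assigns to each color an edge set. -/
abbrev Cfg := ℕ → Finset (ℕ × ℕ)

/-- The node set `V = {1, …, N}`. -/
def V (N : ℕ) : Finset ℕ := Finset.Icc 1 N

/-- The root set `ℛ = {1, …, M}`. -/
def R (M : ℕ) : Finset ℕ := Finset.Icc 1 M

/-- `u` has an incoming `i`-edge (root `i` counts its server link). -/
def HasIn (E : Cfg) (i u : ℕ) : Prop := (∃ w, (w, u) ∈ E i) ∨ u = i

/-- Incoming count of `u`: incoming edges of all colors, plus 1 if `u` is a root. -/
def incCount (M : ℕ) (E : Cfg) (u : ℕ) : ℕ :=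
  (∑ i ∈ R M, inDeg (E i) u) + (if u ∈ R M then 1 else 0)

/-- Total out-degree `d(u)`. -/
def dtot (M : ℕ) (E : Cfg) (u : ℕ) : ℕ := ∑ i ∈ R M, outDeg (E i) u

/-- Edges are ordered pairs of distinct nodes of `V`. -/
def ValidEdges (N M : ℕ) (E : Cfg) : Prop :=
  ∀ i ∈ R M, ∀ e ∈ E i, e.1 ∈ V N ∧ e.2 ∈ V N ∧ e.1 ≠ e.2

/-- Assumption (Tree Initially). -/
def TreeInit (N M K : ℕ) (E : Cfg) : Prop :=
  (∀ u ∈ V N, incCount M E u ≤ K) ∧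
  (∀ i ∈ R M, ∀ u ∈ V N, inDeg (E i) u ≤ 1) ∧
  (∀ i ∈ R M, inDeg (E i) i = 0)

/-- A node is available if it has spare capacity and some incoming edge. -/
def Available (M : ℕ) (E : Cfg) (dbar : ℕ → ℕ) (v : ℕ) : Prop :=
  dtot M E v < dbar v ∧ ∃ i ∈ R M, HasIn E i v

/-- An Add is applicable at `(u_p, u, i)`. -/
def AddApp (N M K : ℕ) (E : Cfg) (dbar : ℕ → ℕ) (up u i : ℕ) : Prop :=
  i ∈ R M ∧ up ∈ V N ∧ u ∈ V N ∧
  incCount M E u < K ∧ ¬ HasIn E i u ∧ HasIn E i up ∧ dtot M E up < dbar up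

/-- An Insert is applicable at `(u_p, u, i)` with `i`-child `u_c` of `u_p`. -/
def InsertApp (N M K : ℕ) (E : Cfg) (up u uc i : ℕ) : Prop :=
  i ∈ R M ∧ up ∈ V N ∧ u ∈ V N ∧
  incCount M E u < K ∧ ¬ HasIn E i u ∧ HasIn E i up ∧ (up, uc) ∈ E i

/-- A Jump is applicable at `(u, v, i)`. -/
def JumpApp (M : ℕ) (E : Cfg) (dbar : ℕ → ℕ) (u v i : ℕ) : Prop :=
  i ∈ R M ∧ (∃ up, (up, u) ∈ E i) ∧ Available M E dbar v ∧ HasIn E i v ∧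
  depth (E i) i v + 1 < depth (E i) i u

/-- A LeafSwap is applicable at `(u, v, i)`. -/
def LeafSwapApp (M : ℕ) (E : Cfg) (u v i : ℕ) : Prop :=
  i ∈ R M ∧ (∃ up, (up, u) ∈ E i) ∧ (∃ vp, (vp, v) ∈ E i) ∧
  outDeg (E i) v = 0 ∧ 0 < outDeg (E i) u ∧
  depth (E i) i v < depth (E i) i u

/-- A MixSwap is applicable at `(u, u_c, v, v_c, i, j)`. -/
def MixSwapApp (M : ℕ) (E : Cfg) (u uc v vc i j : ℕ) : Prop :=
  i ∈ R M ∧ j ∈ R M ∧ i ≠ j ∧ u ≠ v ∧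
  (u, uc) ∈ E i ∧ (v, vc) ∈ E j ∧ uc ≠ v ∧ vc ≠ u ∧
  depth (E i) i v ≤ depth (E i) i u ∧ depth (E j) j u ≤ depth (E j) j v ∧
  ((depth (E i) i u, depth (E j) j u) ≠ (depth (E i) i v, depth (E j) j v) ∨
    ((u : ℤ) - (v : ℤ)) * ((j : ℤ) - (i : ℤ)) > 0)

/-- Result of performing an Add. -/
def doAdd (E : Cfg) (up u i : ℕ) : Cfg :=
  fun l => if l = i then insert (up, u) (E l) else E l

/-- Result of performing an Insert. -/
def doInsert (E : Cfg) (up u uc i : ℕ) : Cfg :=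
  fun l => if l = i then insert (up, u) (insert (u, uc) ((E l).erase (up, uc))) else E l

/-- Result of performing a Jump (parent `u_p` is replaced by `v`). -/
def doJump (E : Cfg) (up u v i : ℕ) : Cfg :=
  fun l => if l = i then insert (v, u) ((E l).erase (up, u)) else E l

/-- Result of performing a LeafSwap (`u` and `v` exchange parents). -/
def doLeafSwap (E : Cfg) (up u vp v i : ℕ) : Cfg :=
  fun l => if l = i then
    insert (up, v) (insert (vp, u) (((E l).erase (up, u)).erase (vp, v))) else E l

/-- Result of performing a MixSwap (`u` and `v` exchange the children `u_c`, `v_c`). -/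
def doMixSwap (E : Cfg) (u uc v vc i j : ℕ) : Cfg :=
  fun l => if l = i then insert (v, uc) ((E l).erase (u, uc))
    else if l = j then insert (u, vc) ((E l).erase (v, vc)) else E l

/-- One step of the algorithm: perform any applicable Add, Insert, Jump,
LeafSwap or MixSwap. -/
def Step (N M K : ℕ) (dbar : ℕ → ℕ) (E E' : Cfg) : Prop :=
  (∃ up u i, AddApp N M K E dbar up u i ∧ E' = doAdd E up u i) ∨
  (∃ up u uc i, InsertApp N M K E up u uc i ∧ E' = doInsert E up u uc i) ∨
  (∃ up u v i, (up, u) ∈ E i ∧ JumpApp M E dbar u v i ∧ E' = doJump E up u v i) ∨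
  (∃ up u vp v i, (up, u) ∈ E i ∧ (vp, v) ∈ E i ∧ LeafSwapApp M E u v i ∧
      E' = doLeafSwap E up u vp v i) ∨
  (∃ u uc v vc i j, MixSwapApp M E u uc v vc i j ∧ E' = doMixSwap E u uc v vc i j)

/-- Total number of edges `|E|`. -/
def numE (M : ℕ) (E : Cfg) : ℕ := ∑ i ∈ R M, (E i).card

/-- `Y = Σ_u Σ_i min(L_i(u), N)`. -/
noncomputable def Yval (N M : ℕ) (E : Cfg) : ℕ :=
  ∑ u ∈ V N, ∑ i ∈ R M, (min (depth (E i) i u) (N : ℕ∞)).toNat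

/-- `S = Σ_u u · Σ_i i · d_i(u)`. -/
def Sval (N M : ℕ) (E : Cfg) : ℕ :=
  ∑ u ∈ V N, u * ∑ i ∈ R M, i * outDeg (E i) u


/-! ### Auxiliary: ℕ∞ helpers -/

theorem enat_add_one_lt_add_one {a b : ℕ∞} (h : a < b) : a + 1 < b + 1 := by
  have ha : a ≠ ⊤ := h.ne_top
  lift a to ℕ using ha
  cases b with
  | top =>
      refine lt_of_le_of_ne le_top ?_
      exact_mod_cast ENat.coe_ne_top (a + 1)
  | coe b =>
      rw [← Nat.cast_one, ← Nat.cast_add, ← Nat.cast_add, Nat.cast_lt]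
      exact Nat.add_lt_add_right (by exact_mod_cast h) 1

theorem enat_lt_of_add_one_lt_add_one {a b : ℕ∞} (h : a + 1 < b + 1) : a < b := by
  have ha : a ≠ ⊤ := by
    intro hh; rw [hh] at h; simp [top_add] at h
  lift a to ℕ using ha
  cases b with
  | top => exact lt_of_le_of_ne le_top (by simp)
  | coe b =>
      rw [← Nat.cast_one, ← Nat.cast_add, ← Nat.cast_add, Nat.cast_lt] at h
      exact_mod_cast Nat.lt_of_add_lt_add_right h

attribute [local instance] Classical.propDecidable

/-! ### Walk lemmas -/

theorem walk_nil {α : Type*} (E : Finset (α × α)) (r : α) : Walk E r r 0 :=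
  ⟨fun _ => r, rfl, rfl, fun k hk => absurd hk (Nat.not_lt_zero k)⟩

theorem walk_mono {α : Type*} {E E' : Finset (α × α)} {r u : α} {n : ℕ}
    (hE : ∀ e ∈ E, e ∈ E') (h : Walk E r u n) : Walk E' r u n := by
  obtain ⟨f, h0, hn, he⟩ := h
  exact ⟨f, h0, hn, fun k hk => hE _ (he k hk)⟩

/-- Append a second walk (given by `g`) after a walk ending at `v`. -/
theorem walk_append {α : Type*} {E : Finset (α × α)} {r v : α} {a : ℕ}
    (h : Walk E r v a) (g : ℕ → α) (m : ℕ) (hg0 : g 0 = v)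
    (hge : ∀ k < m, (g k, g (k + 1)) ∈ E) : Walk E r (g m) (a + m) := by
  obtain ⟨f, hf0, hfa, hfe⟩ := h
  refine ⟨fun t => if t ≤ a then f t else g (t - a),
    (if_pos (Nat.zero_le a)).trans hf0, ?_, ?_⟩
  · rcases Nat.eq_zero_or_pos m with rfl | hm
    · simp [hfa, hg0]
    · have : ¬ (a + m ≤ a) := by omega
      simp only [this, if_false]
      congr 1
      omega
  · intro k hk
    rcases lt_trichotomy k a with hka | hka | hka
    · have h1 : k ≤ a := le_of_lt hka
      have h2 : k + 1 ≤ a := hka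
      simp only [h1, h2, if_true]
      exact hfe k hka
    · subst hka
      have h2 : ¬ (k + 1 ≤ k) := by omega
      simp only [le_refl, if_true, h2, if_false]
      have : k + 1 - k = 1 := by omega
      rw [this, hfa, ← hg0]
      exact hge 0 (by omega)
    · have h1 : ¬ (k ≤ a) := by omega
      have h2 : ¬ (k + 1 ≤ a) := by omega
      simp only [h1, h2, if_false]
      have h3 : k + 1 - a = (k - a) + 1 := by omega
      rw [h3]
      exact hge (k - a) (by omega)

/-- A walk with a repeated vertex can be shortened. -/
theorem walk_splice {α : Type*} {E : Finset (α × α)} {r u : α} {n : ℕ}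
    (f : ℕ → α) (h0 : f 0 = r) (hn : f n = u) (he : ∀ k < n, (f k, f (k + 1)) ∈ E)
    {j k : ℕ} (hjk : j < k) (hkn : k ≤ n) (hf : f j = f k) :
    Walk E r u (n - (k - j)) := by
  refine ⟨fun m => if m ≤ j then f m else f (m + (k - j)),
    (if_pos (Nat.zero_le j)).trans h0, ?_, ?_⟩
  · by_cases hcase : n - (k - j) ≤ j
    · have hnk : n = k := by omega
      simp only [hcase, if_true]
      have : n - (k - j) = j := by omega
      rw [this, hf, ← hnk, hn]
    · simp only [hcase, if_false]
      have : n - (k - j) + (k - j) = n := by omega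
      rw [this, hn]
  · intro m hm
    by_cases h1 : m + 1 ≤ j
    · have h0 : m ≤ j := by omega
      simp only [h0, h1, if_true]
      exact he m (by omega)
    · simp only [h1, if_false]
      by_cases h3 : m ≤ j
      · simp only [h3, if_true]
        have e1 : f m = f k := by rw [show m = j by omega, hf]
        have e2 : m + 1 + (k - j) = k + 1 := by omega
        rw [e1, e2]
        exact he k (by omega)
      · simp only [h3, if_false]
        rw [show m + 1 + (k - j) = m + (k - j) + 1 by omega]
        exact he (m + (k - j)) (by omega)

/-! ### depth lemmas -/

theorem depth_eq_find {α : Type*} {E : Finset (α × α)} {r u : α}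
    (h : ∃ m, Walk E r u m) : depth E r u = (Nat.find h : ℕ∞) := by
  apply le_antisymm
  · exact sInf_le ⟨Nat.find h, rfl, Nat.find_spec h⟩
  · refine le_sInf ?_
    rintro b ⟨m, rfl, hm⟩
    exact_mod_cast Nat.find_le hm

theorem depth_eq_top {α : Type*} {E : Finset (α × α)} {r u : α}
    (h : ¬ ∃ m, Walk E r u m) : depth E r u = ⊤ := by
  rw [depth, sInf_eq_top]
  rintro b ⟨m, rfl, hm⟩
  exact absurd ⟨m, hm⟩ h

theorem depth_le_of_walk {α : Type*} {E : Finset (α × α)} {r u : α} {m : ℕ}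
    (h : Walk E r u m) : depth E r u ≤ (m : ℕ∞) := by
  rw [depth_eq_find ⟨m, h⟩]
  exact_mod_cast Nat.find_le h

theorem depth_root {α : Type*} (E : Finset (α × α)) (r : α) : depth E r r = 0 := by
  simpa using depth_le_of_walk (walk_nil E r)
/-- Extract a minimal walk from a finite depth. -/
theorem depth_spec {α : Type*} {E : Finset (α × α)} {r u : α} {n : ℕ}
    (h : depth E r u = (n : ℕ∞)) :
    Walk E r u n ∧ ∀ m < n, ¬ Walk E r u m := by
  by_cases hw : ∃ m, Walk E r u m
  · rw [depth_eq_find hw] at h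
    have hn : Nat.find hw = n := by exact_mod_cast h
    subst hn
    exact ⟨Nat.find_spec hw, fun m hm => Nat.find_min hw hm⟩
  · rw [depth_eq_top hw] at h
    exact absurd h.symm (by simp)

theorem depth_ne_top_iff {α : Type*} {E : Finset (α × α)} {r u : α} :
    depth E r u ≠ ⊤ ↔ ∃ m, Walk E r u m := by
  constructor
  · intro h
    by_contra hw
    exact h (depth_eq_top hw)
  · intro hw
    rw [depth_eq_find hw]
    exact ENat.coe_ne_top _

theorem depth_child {α : Type*} {E : Finset (α × α)} {r p c : α} (hpc : (p, c) ∈ E) :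
    depth E r c ≤ depth E r p + 1 := by
  by_cases hp : depth E r p = ⊤
  · simp [hp]
  · obtain ⟨m, hm⟩ := depth_ne_top_iff.mp hp
    have hw : Walk E r p (Nat.find ⟨m, hm⟩ : ℕ) := Nat.find_spec ⟨m, hm⟩
    have := walk_append hw (fun k => if k = 0 then p else c) 1 rfl
      (by intro k hk; interval_cases k; simpa using hpc)
    simp only [if_neg one_ne_zero] at this
    calc depth E r c ≤ _ := depth_le_of_walk this
    _ = depth E r p + 1 := by rw [depth_eq_find ⟨m, hm⟩]; push_cast; ring

/-- If the only in-edge of `c` is from `p`, and `c ≠ r`, the depth of `c` is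
exactly `depth p + 1`. -/
theorem depth_parent_unique {α : Type*} {E : Finset (α × α)} {r p c : α}
    (hpc : (p, c) ∈ E) (huniq : ∀ w, (w, c) ∈ E → w = p) (hcr : c ≠ r) :
    depth E r c = depth E r p + 1 := by
  refine le_antisymm (depth_child hpc) ?_
  by_cases hc : depth E r c = ⊤
  · rw [hc]; exact le_top
  · obtain ⟨n, hn⟩ : ∃ n : ℕ, depth E r c = n := by
      cases hh : depth E r c with
      | top => exact absurd hh hc
      | coe n => exact ⟨n, rfl⟩
    obtain ⟨⟨f, h0, hfn, he⟩, -⟩ := depth_spec hn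
    have hn0 : n ≠ 0 := by
      rintro rfl
      exact hcr (hfn ▸ h0.symm ▸ rfl)
    have hlast : (f (n - 1), f (n - 1 + 1)) ∈ E := he (n - 1) (by omega)
    rw [show n - 1 + 1 = n by omega, hfn] at hlast
    have hfp : f (n - 1) = p := huniq _ hlast
    have hwp : Walk E r p (n - 1) := ⟨f, h0, hfp, fun k hk => he k (by omega)⟩
    have := depth_le_of_walk hwp
    calc depth E r p + 1 ≤ ((n - 1 : ℕ) : ℕ∞) + 1 := by
          exact add_le_add_left this 1
    _ = (n : ℕ∞) := by
          rw [show ((n - 1 : ℕ) : ℕ∞) + 1 = ((n - 1 + 1 : ℕ) : ℕ∞) by push_cast; ring,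
            show n - 1 + 1 = n by omega]
    _ = depth E r c := hn.symm

/-- A minimal walk has pairwise distinct vertices. -/
theorem exists_injective_walk {α : Type*} {E : Finset (α × α)} {r u : α} {n : ℕ}
    (hd : depth E r u = (n : ℕ∞)) :
    ∃ f : ℕ → α, f 0 = r ∧ f n = u ∧ (∀ k < n, (f k, f (k + 1)) ∈ E) ∧
      ∀ j k, j ≤ n → k ≤ n → f j = f k → j = k := by
  obtain ⟨⟨f, h0, hn, he⟩, hmin⟩ := depth_spec hd
  refine ⟨f, h0, hn, he, ?_⟩
  intro j k hj hk hf
  by_contra hne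
  rcases Nat.lt_or_ge j k with hjk | hjk
  · rcases Nat.eq_or_lt_of_le hk with rfl | hk'
    · -- k = n : splice from j to n, landing at u since f j = f n = u
      have := walk_splice f h0 hn he hjk le_rfl hf
      exact hmin _ (by omega) this
    · have := walk_splice f h0 hn he hjk hk hf
      exact hmin _ (by omega) this
  · have hkj : k < j := by omega
    rcases Nat.eq_or_lt_of_le hj with rfl | hj'
    · have := walk_splice f h0 hn he hkj le_rfl hf.symm
      exact hmin _ (by omega) this
    · have := walk_splice f h0 hn he hkj hj hf.symm
      exact hmin _ (by omega) this

/-- A finite depth is smaller than the number of available vertices. -/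
theorem depth_lt_card {α : Type*} [DecidableEq α] {E : Finset (α × α)} {r u : α}
    {S : Finset α} (hr : r ∈ S) (hT : ∀ e ∈ E, e.2 ∈ S)
    (h : depth E r u ≠ ⊤) : depth E r u < (S.card : ℕ∞) := by
  obtain ⟨n, hn⟩ : ∃ n : ℕ, depth E r u = n := by
    cases hh : depth E r u with
    | top => exact absurd hh h
    | coe n => exact ⟨n, rfl⟩
  obtain ⟨f, h0, hfn, he, hinj⟩ := exists_injective_walk hn
  have hsub : ∀ k ≤ n, f k ∈ S := by
    intro k hk
    cases k with
    | zero => rw [h0]; exact hr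
    | succ m => exact hT _ (he m (by omega))
  have hcard : n + 1 ≤ S.card := by
    have : ((Finset.range (n + 1)).image f) ⊆ S := by
      intro x hx
      obtain ⟨k, hk, rfl⟩ := Finset.mem_image.mp hx
      exact hsub k (by simpa using Nat.lt_succ_iff.mp (Finset.mem_range.mp hk))
    calc n + 1 = ((Finset.range (n + 1)).image f).card := by
          rw [Finset.card_image_of_injOn, Finset.card_range]
          intro a ha b hb hab
          exact hinj a b (Nat.lt_succ_iff.mp (Finset.mem_range.mp ha))
            (Nat.lt_succ_iff.mp (Finset.mem_range.mp hb)) hab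
    _ ≤ S.card := Finset.card_le_card this
  rw [hn]
  exact_mod_cast by omega

/-- If some vertex of `S` is unreachable, every reachable vertex has depth
at most `S.card - 2`. -/
theorem depth_add_one_lt_of_unreached {α : Type*} [DecidableEq α] {E : Finset (α × α)}
    {r v w : α} {S : Finset α} (hr : r ∈ S) (hT : ∀ e ∈ E, e.2 ∈ S)
    (hv : depth E r v ≠ ⊤) (hw : w ∈ S) (hwd : depth E r w = ⊤) :
    depth E r v + 1 < (S.card : ℕ∞) := by
  obtain ⟨n, hn⟩ : ∃ n : ℕ, depth E r v = n := by
    cases hh : depth E r v with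
    | top => exact absurd hh hv
    | coe n => exact ⟨n, rfl⟩
  obtain ⟨f, h0, hfn, he, hinj⟩ := exists_injective_walk hn
  have hsub : ∀ k ≤ n, f k ∈ S := by
    intro k hk
    cases k with
    | zero => rw [h0]; exact hr
    | succ m => exact hT _ (he m (by omega))
  have hwf : ∀ k ≤ n, f k ≠ w := by
    intro k hk hfw
    have : Walk E r w k := ⟨f, h0, hfw, fun m hm => he m (by omega)⟩
    have := depth_le_of_walk this
    rw [hwd] at this
    exact absurd this (by simp)
  have hcard : n + 2 ≤ S.card := by
    have hsubset : insert w ((Finset.range (n + 1)).image f) ⊆ S := by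
      intro x hx
      rcases Finset.mem_insert.mp hx with rfl | hx
      · exact hw
      · obtain ⟨k, hk, rfl⟩ := Finset.mem_image.mp hx
        exact hsub k (Nat.lt_succ_iff.mp (Finset.mem_range.mp hk))
    have hwnot : w ∉ (Finset.range (n + 1)).image f := by
      intro hx
      obtain ⟨k, hk, hkw⟩ := Finset.mem_image.mp hx
      exact hwf k (Nat.lt_succ_iff.mp (Finset.mem_range.mp hk)) hkw
    have himg : ((Finset.range (n + 1)).image f).card = n + 1 := by
      rw [Finset.card_image_of_injOn, Finset.card_range]
      intro a ha b hb hab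
      exact hinj a b (Nat.lt_succ_iff.mp (Finset.mem_range.mp ha))
        (Nat.lt_succ_iff.mp (Finset.mem_range.mp hb)) hab
    calc n + 2 = (insert w ((Finset.range (n + 1)).image f)).card := by
          rw [Finset.card_insert_of_notMem hwnot, himg]
    _ ≤ S.card := Finset.card_le_card hsubset
  rw [hn]
  exact_mod_cast by omega
/-- Re-parenting `c` from `u` to a vertex `v` that is at most as deep never
increases any depth. -/
theorem reparent_le {α : Type*} [DecidableEq α] {E : Finset (α × α)} {r u v c : α}
    (huc : (u, c) ∈ E) (hvu : depth E r v ≤ depth E r u) (w : α) :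
    depth (insert (v, c) (E.erase (u, c))) r w ≤ depth E r w := by
  set E' := insert (v, c) (E.erase (u, c)) with hE'
  suffices H : ∀ n : ℕ, ∀ w : α, depth E r w = (n : ℕ∞) → depth E' r w ≤ (n : ℕ∞) by
    cases hh : depth E r w with
    | top => simp
    | coe n => exact H n w hh
  intro n
  induction n using Nat.strong_induction_on with
  | _ n IH =>
    intro w hw
    obtain ⟨⟨f, h0, hfn, he⟩, -⟩ := depth_spec hw
    by_cases hkuse : ∃ m, m < n ∧ f m = u ∧ f (m + 1) = c
    case neg =>
      refine depth_le_of_walk ⟨f, h0, hfn, fun k hk => ?_⟩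
      have hne : (f k, f (k + 1)) ≠ (u, c) := by
        intro hh
        exact hkuse ⟨k, hk, congrArg Prod.fst hh, congrArg Prod.snd hh⟩
      exact Finset.mem_insert_of_mem (Finset.mem_erase.mpr ⟨hne, he k hk⟩)
    case pos =>
      set P : ℕ → Prop := fun m => m < n ∧ f m = u ∧ f (m + 1) = c with hP
      obtain ⟨k0, hk0⟩ := hkuse
      set k := Nat.findGreatest P n with hkdef
      have hPk : P k := Nat.findGreatest_spec (le_of_lt hk0.1) hk0
      obtain ⟨hkn, hku, hkc⟩ := hPk
      have hmax : ∀ m, k < m → m < n → (f m, f (m + 1)) ≠ (u, c) := by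
        intro m hm1 hm2 hh
        exact Nat.findGreatest_is_greatest hm1 (le_of_lt hm2)
          ⟨hm2, congrArg Prod.fst hh, congrArg Prod.snd hh⟩
      -- depth of u, hence of v, is at most k
      have hdu : depth E r u ≤ (k : ℕ∞) :=
        depth_le_of_walk ⟨f, h0, hku, fun m hm => he m (by omega)⟩
      have hdv : depth E r v ≤ (k : ℕ∞) := le_trans hvu hdu
      obtain ⟨mv, hmv⟩ : ∃ mv : ℕ, depth E r v = (mv : ℕ∞) := by
        cases hh : depth E r v with
        | top => rw [hh] at hdv; exact absurd hdv (by simp)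
        | coe m => exact ⟨m, rfl⟩
      have hmvk : mv ≤ k := by
        rw [hmv] at hdv; exact_mod_cast hdv
      have hv' : depth E' r v ≤ (mv : ℕ∞) := IH mv (by omega) v hmv
      obtain ⟨m', hm'⟩ : ∃ m' : ℕ, depth E' r v = (m' : ℕ∞) := by
        cases hh : depth E' r v with
        | top => rw [hh] at hv'; exact absurd hv' (by simp)
        | coe m => exact ⟨m, rfl⟩
      have hm'le : m' ≤ mv := by rw [hm'] at hv'; exact_mod_cast hv'
      obtain ⟨hwv, -⟩ := depth_spec hm'
      -- append the tail of f after the new edge (v, c)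
      have happ := walk_append hwv (fun s => if s = 0 then v else f (k + s)) (n - k)
        rfl ?_
      · have hend : (fun s => if s = 0 then v else f (k + s)) (n - k) = w := by
          have : n - k ≠ 0 := by omega
          simp only [this, if_false]
          rw [show k + (n - k) = n by omega, hfn]
        rw [show (if n - k = 0 then v else f (k + (n - k))) = w from hend] at happ
        calc depth E' r w ≤ ((m' + (n - k) : ℕ) : ℕ∞) := depth_le_of_walk happ
        _ ≤ (n : ℕ∞) := by exact_mod_cast by omega
      · intro s hs
        rcases Nat.eq_zero_or_pos s with rfl | hs0
        · simp only [if_pos rfl, if_neg one_ne_zero]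
          rw [show k + 1 = k + 1 by rfl, hkc]
          exact Finset.mem_insert_self _ _
        · have hs1 : s ≠ 0 := by omega
          have hs2 : s + 1 ≠ 0 := by omega
          simp only [hs1, hs2, if_false]
          rw [show k + (s + 1) = (k + s) + 1 by omega]
          have hmem : (f (k + s), f (k + s + 1)) ∈ E := he (k + s) (by omega)
          have hne : (f (k + s), f (k + s + 1)) ≠ (u, c) :=
            hmax (k + s) (by omega) (by omega)
          exact Finset.mem_insert_of_mem (Finset.mem_erase.mpr ⟨hne, hmem⟩)

/-- The LeafSwap operation never increases the depth of a vertex other than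
`v` (the old leaf). -/
theorem leafswap_le {α : Type*} [DecidableEq α] {E : Finset (α × α)} {r up u vp v : α}
    (hu : (up, u) ∈ E) (hv : (vp, v) ∈ E)
    (hvuniq : ∀ w, (w, v) ∈ E → w = vp)
    (hleaf : ∀ c, (v, c) ∉ E)
    (hd : depth E r v < depth E r u) (hvr : v ≠ r) (w : α) (hwv : w ≠ v) :
    depth (insert (up, v) (insert (vp, u) ((E.erase (up, u)).erase (vp, v)))) r w
      ≤ depth E r w := by
  set E' := insert (up, v) (insert (vp, u) ((E.erase (up, u)).erase (vp, v))) with hE'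
  suffices H : ∀ n : ℕ, ∀ w : α, w ≠ v → depth E r w = (n : ℕ∞) → depth E' r w ≤ (n : ℕ∞) by
    cases hh : depth E r w with
    | top => simp
    | coe n => exact H n w hwv hh
  clear hwv w
  intro n
  induction n using Nat.strong_induction_on with
  | _ n IH =>
    intro w hwv hw
    obtain ⟨⟨f, h0, hfn, he⟩, -⟩ := depth_spec hw
    -- the edge (vp, v) is never used in a walk to w ≠ v
    have hnov : ∀ m < n, (f m, f (m + 1)) ≠ (vp, v) := by
      intro m hm hh
      have hfv : f (m + 1) = v := congrArg Prod.snd hh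
      rcases Nat.lt_or_ge (m + 1) n with hlt | hge
      · exact hleaf _ (hfv ▸ he (m + 1) hlt)
      · have hmn : m + 1 = n := by omega
        rw [hmn, hfn] at hfv
        exact hwv hfv
    by_cases hkuse : ∃ m, m < n ∧ f m = up ∧ f (m + 1) = u
    case neg =>
      refine depth_le_of_walk ⟨f, h0, hfn, fun k hk => ?_⟩
      have hne : (f k, f (k + 1)) ≠ (up, u) := by
        intro hh
        exact hkuse ⟨k, hk, congrArg Prod.fst hh, congrArg Prod.snd hh⟩
      exact Finset.mem_insert_of_mem (Finset.mem_insert_of_mem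
        (Finset.mem_erase.mpr ⟨hnov k hk, Finset.mem_erase.mpr ⟨hne, he k hk⟩⟩))
    case pos =>
      set P : ℕ → Prop := fun m => m < n ∧ f m = up ∧ f (m + 1) = u with hP
      obtain ⟨k0, hk0⟩ := hkuse
      set k := Nat.findGreatest P n with hkdef
      have hPk : P k := Nat.findGreatest_spec (le_of_lt hk0.1) hk0
      obtain ⟨hkn, hkup, hkcu⟩ := hPk
      have hmax : ∀ m, k < m → m < n → (f m, f (m + 1)) ≠ (up, u) := by
        intro m hm1 hm2 hh
        exact Nat.findGreatest_is_greatest hm1 (le_of_lt hm2)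
          ⟨hm2, congrArg Prod.fst hh, congrArg Prod.snd hh⟩
      -- depth of u ≤ k + 1, so depth v ≤ k, so depth vp ≤ k - 1 < n
      have hdu : depth E r u ≤ ((k + 1 : ℕ) : ℕ∞) :=
        depth_le_of_walk ⟨f, h0, hkcu, fun m hm => he m (by omega)⟩
      have hdvlt : depth E r v < ((k + 1 : ℕ) : ℕ∞) := lt_of_lt_of_le hd hdu
      obtain ⟨mv, hmv⟩ : ∃ mv : ℕ, depth E r v = (mv : ℕ∞) := by
        cases hh : depth E r v with
        | top => rw [hh] at hdvlt; exact absurd hdvlt (by simp)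
        | coe m => exact ⟨m, rfl⟩
      have hmvk : mv ≤ k := by
        rw [hmv] at hdvlt
        have : mv < k + 1 := by exact_mod_cast hdvlt
        omega
      -- depth of vp
      have hdveq : depth E r v = depth E r vp + 1 := depth_parent_unique hv hvuniq hvr
      obtain ⟨mp, hmp⟩ : ∃ mp : ℕ, depth E r vp = (mp : ℕ∞) := by
        cases hh : depth E r vp with
        | top => rw [hh] at hdveq; rw [hdveq] at hmv; simp [top_add] at hmv
        | coe m => exact ⟨m, rfl⟩
      have hmpk : mp + 1 = mv := by
        rw [hmv, hmp] at hdveq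
        exact_mod_cast hdveq.symm
      have hvpv : vp ≠ v := by
        intro hh
        exact hleaf v (hh ▸ hv)
      have hvp' : depth E' r vp ≤ (mp : ℕ∞) := IH mp (by omega) vp hvpv hmp
      obtain ⟨m', hm'⟩ : ∃ m' : ℕ, depth E' r vp = (m' : ℕ∞) := by
        cases hh : depth E' r vp with
        | top => rw [hh] at hvp'; exact absurd hvp' (by simp)
        | coe m => exact ⟨m, rfl⟩
      have hm'le : m' ≤ mp := by rw [hm'] at hvp'; exact_mod_cast hvp'
      obtain ⟨hwvp, -⟩ := depth_spec hm'
      have happ := walk_append hwvp (fun s => if s = 0 then vp else f (k + s)) (n - k)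
        rfl ?_
      · have hend : (fun s => if s = 0 then vp else f (k + s)) (n - k) = w := by
          have : n - k ≠ 0 := by omega
          simp only [this, if_false]
          rw [show k + (n - k) = n by omega, hfn]
        rw [show (if n - k = 0 then vp else f (k + (n - k))) = w from hend] at happ
        calc depth E' r w ≤ ((m' + (n - k) : ℕ) : ℕ∞) := depth_le_of_walk happ
        _ ≤ (n : ℕ∞) := by exact_mod_cast by omega
      · intro s hs
        rcases Nat.eq_zero_or_pos s with rfl | hs0
        · simp only [if_pos rfl, if_neg one_ne_zero]
          rw [hkcu]
          exact Finset.mem_insert_of_mem (Finset.mem_insert_self _ _)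
        · have hs1 : s ≠ 0 := by omega
          have hs2 : s + 1 ≠ 0 := by omega
          simp only [hs1, hs2, if_false]
          rw [show k + (s + 1) = (k + s) + 1 by omega]
          have hmem : (f (k + s), f (k + s + 1)) ∈ E := he (k + s) (by omega)
          have hne : (f (k + s), f (k + s + 1)) ≠ (up, u) :=
            hmax (k + s) (by omega) (by omega)
          exact Finset.mem_insert_of_mem (Finset.mem_insert_of_mem
            (Finset.mem_erase.mpr ⟨hnov (k + s) (by omega), Finset.mem_erase.mpr ⟨hne, hmem⟩⟩))
/-! ### Truncated depth -/

noncomputable def tmin (N : ℕ) (d : ℕ∞) : ℕ := (min d (N : ℕ∞)).toNat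

theorem tmin_mono {N : ℕ} {d d' : ℕ∞} (h : d ≤ d') : tmin N d ≤ tmin N d' :=
  ENat.toNat_le_toNat (min_le_min h le_rfl)
    (by exact ne_top_of_le_ne_top (ENat.coe_ne_top N) (min_le_right _ _))

theorem tmin_lt {N : ℕ} {d d' : ℕ∞} (h1 : d < d') (h2 : d < (N : ℕ∞)) :
    tmin N d < tmin N d' := by
  have hd : d ≠ ⊤ := h1.ne_top
  lift d to ℕ using hd
  have e1 : tmin N (d : ℕ∞) = d := by
    rw [tmin, min_eq_left h2.le, ENat.toNat_coe]
  have h3 : (d : ℕ∞) < min d' (N : ℕ∞) := lt_min h1 h2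
  have e2 : d < tmin N d' := by
    have hne : min d' (N : ℕ∞) ≠ ⊤ :=
      ne_top_of_le_ne_top (ENat.coe_ne_top N) (min_le_right _ _)
    obtain ⟨m, hm⟩ : ∃ m : ℕ, min d' (N : ℕ∞) = m := by
      cases hh : min d' (N : ℕ∞) with
      | top => exact absurd hh hne
      | coe m => exact ⟨m, rfl⟩
    rw [tmin, hm, ENat.toNat_coe]
    rw [hm] at h3
    exact_mod_cast h3
  omega

theorem tmin_le {N : ℕ} (d : ℕ∞) : tmin N d ≤ N :=
  ENat.toNat_le_of_le_coe (min_le_right _ _)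

/-! ### Degree counting -/

theorem outDeg_insert {E : Finset (ℕ × ℕ)} {e : ℕ × ℕ} (h : e ∉ E) (w : ℕ) :
    outDeg (insert e E) w = outDeg E w + (if e.1 = w then 1 else 0) := by
  unfold outDeg
  rw [Finset.filter_insert]
  by_cases he : e.1 = w
  · rw [if_pos he, if_pos he, Finset.card_insert_of_notMem (fun hc => h (Finset.mem_filter.mp hc).1)]
  · rw [if_neg he, if_neg he, add_zero]

theorem outDeg_erase {E : Finset (ℕ × ℕ)} {e : ℕ × ℕ} (h : e ∈ E) (w : ℕ) :
    outDeg E w = outDeg (E.erase e) w + (if e.1 = w then 1 else 0) := by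
  have : E = insert e (E.erase e) := (Finset.insert_erase h).symm
  conv_lhs => rw [this]
  exact outDeg_insert (Finset.notMem_erase e E) w

theorem inDeg_insert {E : Finset (ℕ × ℕ)} {e : ℕ × ℕ} (h : e ∉ E) (w : ℕ) :
    inDeg (insert e E) w = inDeg E w + (if e.2 = w then 1 else 0) := by
  unfold inDeg
  rw [Finset.filter_insert]
  by_cases he : e.2 = w
  · rw [if_pos he, if_pos he, Finset.card_insert_of_notMem (fun hc => h (Finset.mem_filter.mp hc).1)]
  · rw [if_neg he, if_neg he, add_zero]

theorem inDeg_erase {E : Finset (ℕ × ℕ)} {e : ℕ × ℕ} (h : e ∈ E) (w : ℕ) :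
    inDeg E w = inDeg (E.erase e) w + (if e.2 = w then 1 else 0) := by
  have : E = insert e (E.erase e) := (Finset.insert_erase h).symm
  conv_lhs => rw [this]
  exact inDeg_insert (Finset.notMem_erase e E) w

theorem inDeg_pos_of_mem {E : Finset (ℕ × ℕ)} {p c : ℕ} (h : (p, c) ∈ E) :
    0 < inDeg E c := by
  rw [inDeg]
  exact Finset.card_pos.mpr ⟨(p, c), Finset.mem_filter.mpr ⟨h, rfl⟩⟩

theorem outDeg_pos_of_mem {E : Finset (ℕ × ℕ)} {p c : ℕ} (h : (p, c) ∈ E) :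
    0 < outDeg E p := by
  rw [outDeg]
  exact Finset.card_pos.mpr ⟨(p, c), Finset.mem_filter.mpr ⟨h, rfl⟩⟩

theorem not_mem_of_inDeg_zero {E : Finset (ℕ × ℕ)} {c : ℕ} (h : inDeg E c = 0)
    (p : ℕ) : (p, c) ∉ E := fun hc => Nat.lt_irrefl 0 (h ▸ inDeg_pos_of_mem hc)

theorem not_mem_of_outDeg_zero {E : Finset (ℕ × ℕ)} {v : ℕ} (h : outDeg E v = 0)
    (c : ℕ) : (v, c) ∉ E := fun hc => Nat.lt_irrefl 0 (h ▸ outDeg_pos_of_mem hc)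

theorem parent_unique {E : Finset (ℕ × ℕ)} {p c : ℕ} (h1 : inDeg E c ≤ 1)
    (hp : (p, c) ∈ E) : ∀ w, (w, c) ∈ E → w = p := by
  intro w hw
  have hwmem : (w, c) ∈ E.filter (fun e => e.2 = c) := Finset.mem_filter.mpr ⟨hw, rfl⟩
  have hpmem : (p, c) ∈ E.filter (fun e => e.2 = c) := Finset.mem_filter.mpr ⟨hp, rfl⟩
  have := Finset.card_le_one.mp h1 _ hwmem _ hpmem
  exact congrArg Prod.fst this

theorem exists_child_of_outDeg_pos {E : Finset (ℕ × ℕ)} {u : ℕ} (h : 0 < outDeg E u) :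
    ∃ c, (u, c) ∈ E := by
  obtain ⟨e, he⟩ := Finset.card_pos.mp h
  have := Finset.mem_filter.mp he
  exact ⟨e.2, by rw [← this.2]; exact this.1⟩

theorem card_eq_sum_inDeg {N : ℕ} {E : Finset (ℕ × ℕ)} (h : ∀ e ∈ E, e.2 ∈ V N) :
    E.card = ∑ w ∈ V N, inDeg E w :=
  Finset.card_eq_sum_card_fiberwise h

theorem card_eq_sum_outDeg {N : ℕ} {E : Finset (ℕ × ℕ)} (h : ∀ e ∈ E, e.1 ∈ V N) :
    E.card = ∑ w ∈ V N, outDeg E w :=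
  Finset.card_eq_sum_card_fiberwise h

/-! ### The invariant -/

def Inv (N M K : ℕ) (E : Cfg) : Prop :=
  ValidEdges N M E ∧
  (∀ i ∈ R M, ∀ u, inDeg (E i) u ≤ 1) ∧
  (∀ i ∈ R M, inDeg (E i) i = 0) ∧
  (∀ u, (∑ i ∈ R M, inDeg (E i) u) + (if u ∈ R M then 1 else 0) ≤ K)

theorem R_subset_V {N M : ℕ} (h : M ≤ N) : R M ⊆ V N := by
  intro x hx
  rw [R, Finset.mem_Icc] at hx
  rw [V, Finset.mem_Icc]
  omega

theorem inDeg_zero_outside {N M : ℕ} {E : Cfg} (hv : ValidEdges N M E)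
    {i : ℕ} (hi : i ∈ R M) {u : ℕ} (hu : u ∉ V N) : inDeg (E i) u = 0 := by
  rw [inDeg, Finset.card_eq_zero, Finset.filter_eq_empty_iff]
  intro e he hee
  exact hu (hee ▸ (hv i hi e he).2.1)

theorem Inv_init {N M K : ℕ} {E : Cfg} (hMN : M ≤ N) (hv : ValidEdges N M E)
    (ht : TreeInit N M K E) : Inv N M K E := by
  obtain ⟨h1, h2, h3⟩ := ht
  refine ⟨hv, ?_, h3, ?_⟩
  · intro i hi u
    by_cases hu : u ∈ V N
    · exact h2 i hi u hu
    · rw [inDeg_zero_outside hv hi hu]; omega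
  · intro u
    by_cases hu : u ∈ V N
    · exact h1 u hu
    · have hr : u ∉ R M := fun hc => hu (R_subset_V hMN hc)
      rw [if_neg hr, add_zero]
      have : ∀ i ∈ R M, inDeg (E i) u = 0 := fun i hi => inDeg_zero_outside hv hi hu
      rw [Finset.sum_congr rfl this, Finset.sum_const_zero]
      exact Nat.zero_le K
/-! ### Yval column manipulation -/

theorem V_card (N : ℕ) : (V N).card = N := by rw [V, Nat.card_Icc]; omega
theorem R_card (M : ℕ) : (R M).card = M := by rw [R, Nat.card_Icc]; omega

theorem Yval_eq (N M : ℕ) (E : Cfg) :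
    Yval N M E = ∑ i ∈ R M, ∑ u ∈ V N, tmin N (depth (E i) i u) := by
  rw [Yval, Finset.sum_comm]
  rfl

theorem Yval_lt_col {N M : ℕ} {E E' : Cfg} {i : ℕ} (hi : i ∈ R M)
    (hoth : ∀ l ∈ R M, l ≠ i → E' l = E l)
    (hcol : ∑ u ∈ V N, tmin N (depth (E' i) i u) < ∑ u ∈ V N, tmin N (depth (E i) i u)) :
    Yval N M E' < Yval N M E := by
  rw [Yval_eq, Yval_eq]
  refine Finset.sum_lt_sum (fun l hl => ?_) ⟨i, hi, hcol⟩
  by_cases hliq : l = i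
  · subst hliq; exact le_of_lt hcol
  · rw [hoth l hl hliq]

theorem Yval_le_col2 {N M : ℕ} {E E' : Cfg} {i j : ℕ} (hi : i ∈ R M) (hj : j ∈ R M)
    (hoth : ∀ l ∈ R M, l ≠ i → l ≠ j → E' l = E l)
    (hcoli : ∑ u ∈ V N, tmin N (depth (E' i) i u) ≤ ∑ u ∈ V N, tmin N (depth (E i) i u))
    (hcolj : ∑ u ∈ V N, tmin N (depth (E' j) j u) ≤ ∑ u ∈ V N, tmin N (depth (E j) j u)) :
    Yval N M E' ≤ Yval N M E := by
  rw [Yval_eq, Yval_eq]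
  refine Finset.sum_le_sum (fun l hl => ?_)
  by_cases hli : l = i
  · subst hli; exact hcoli
  by_cases hlj : l = j
  · subst hlj; exact hcolj
  rw [hoth l hl hli hlj]

theorem Yval_lt_col2 {N M : ℕ} {E E' : Cfg} {i j : ℕ} (hi : i ∈ R M) (hj : j ∈ R M)
    (hoth : ∀ l ∈ R M, l ≠ i → l ≠ j → E' l = E l)
    (hcoli : ∑ u ∈ V N, tmin N (depth (E' i) i u) < ∑ u ∈ V N, tmin N (depth (E i) i u))
    (hcolj : ∑ u ∈ V N, tmin N (depth (E' j) j u) ≤ ∑ u ∈ V N, tmin N (depth (E j) j u)) :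
    Yval N M E' < Yval N M E := by
  rw [Yval_eq, Yval_eq]
  refine Finset.sum_lt_sum (fun l hl => ?_) ⟨i, hi, hcoli⟩
  by_cases hli : l = i
  · subst hli; exact le_of_lt hcoli
  by_cases hlj : l = j
  · subst hlj; exact hcolj
  rw [hoth l hl hli hlj]

/-- Summation bound after exchanging the roles of `u` and `v`. -/
theorem sum_swap_lt {s : Finset ℕ} {F G : ℕ → ℕ} {u v c : ℕ}
    (hu : u ∈ s) (hv : v ∈ s) (hc : c ∈ s) (huv : u ≠ v) (hcu : c ≠ u) (hcv : c ≠ v)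
    (hle : ∀ w ∈ s, w ≠ u → w ≠ v → G w ≤ F w)
    (hgu : G u ≤ F v) (hgv : G v ≤ F u) (hgc : G c < F c) :
    ∑ w ∈ s, G w < ∑ w ∈ s, F w := by
  set F' : ℕ → ℕ := fun w => if w = u then F v else if w = v then F u else F w with hF'
  have heq : ∑ w ∈ s, F' w = ∑ w ∈ s, F w := by
    refine Finset.sum_equiv (Equiv.swap u v) (fun w => ?_) (fun w hw => ?_)
    · by_cases h1 : w = u
      · subst h1; rw [Equiv.swap_apply_left]; exact ⟨fun _ => hv, fun _ => hu⟩
      by_cases h2 : w = v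
      · subst h2; rw [Equiv.swap_apply_right]; exact ⟨fun _ => hu, fun _ => hv⟩
      rw [Equiv.swap_apply_of_ne_of_ne h1 h2]
    · simp only [hF']
      by_cases h1 : w = u
      · subst h1; simp [Equiv.swap_apply_left]
      by_cases h2 : w = v
      · subst h2; simp [Equiv.swap_apply_right, h1, huv.symm]
      simp [h1, h2, Equiv.swap_apply_of_ne_of_ne h1 h2]
  rw [← heq]
  refine Finset.sum_lt_sum (fun w hw => ?_) ⟨c, hc, ?_⟩
  · simp only [hF']
    by_cases h1 : w = u
    · subst h1; simpa using hgu
    by_cases h2 : w = v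
    · subst h2; simp only [huv.symm, if_false, if_pos rfl, if_neg h1]; exact hgv
    simp only [if_neg h1, if_neg h2]; exact hle w hw h1 h2
  · simp only [hF', if_neg hcu, if_neg hcv]; exact hgc

/-! ### Bounds on the potential components -/

theorem numE_le {N M K : ℕ} {E : Cfg} (hI : Inv N M K E) : numE M E ≤ K * N := by
  obtain ⟨hval, -, -, hK⟩ := hI
  have h1 : ∀ i ∈ R M, (E i).card = ∑ w ∈ V N, inDeg (E i) w := by
    intro i hi
    exact card_eq_sum_inDeg (fun e he => (hval i hi e he).2.1)
  rw [numE, Finset.sum_congr rfl h1, Finset.sum_comm]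
  calc ∑ w ∈ V N, ∑ i ∈ R M, inDeg (E i) w ≤ ∑ _w ∈ V N, K := by
        refine Finset.sum_le_sum (fun w _ => ?_)
        have := hK w
        omega
  _ = K * N := by rw [Finset.sum_const, V_card, smul_eq_mul, mul_comm]

theorem Yval_bound (N M : ℕ) (E : Cfg) : Yval N M E ≤ N * (M * N) := by
  rw [Yval_eq]
  calc ∑ i ∈ R M, ∑ u ∈ V N, tmin N (depth (E i) i u)
      ≤ ∑ _i ∈ R M, ∑ _u ∈ V N, N :=
        Finset.sum_le_sum (fun i _ => Finset.sum_le_sum (fun u _ => tmin_le _))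
  _ = M * (N * N) := by simp [Finset.sum_const, V_card, R_card, mul_assoc]
  _ = N * (M * N) := by ring

theorem Sval_bound {N M K : ℕ} {E : Cfg} (hI : Inv N M K E) :
    Sval N M E ≤ N * (M * (K * N)) := by
  have hval := hI.1
  have hstep : Sval N M E ≤ N * (M * numE M E) := by
    rw [Sval]
    calc ∑ u ∈ V N, u * ∑ i ∈ R M, i * outDeg (E i) u
        ≤ ∑ u ∈ V N, N * ∑ i ∈ R M, M * outDeg (E i) u := by
          refine Finset.sum_le_sum (fun u hu => Nat.mul_le_mul ?_ ?_)
          · rw [V, Finset.mem_Icc] at hu; omega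
          · refine Finset.sum_le_sum (fun i hi => Nat.mul_le_mul_right _ ?_)
            rw [R, Finset.mem_Icc] at hi; omega
    _ = N * ∑ u ∈ V N, ∑ i ∈ R M, M * outDeg (E i) u := by rw [← Finset.mul_sum]
    _ = N * (M * ∑ u ∈ V N, ∑ i ∈ R M, outDeg (E i) u) := by
          congr 1
          conv_rhs => rw [Finset.mul_sum]
          exact Finset.sum_congr rfl (fun u _ => by rw [Finset.mul_sum])
    _ = N * (M * numE M E) := by
          rw [Finset.sum_comm, numE]
          congr 2
          exact Finset.sum_congr rfl (fun i hi =>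
            (card_eq_sum_outDeg (fun e he => (hval i hi e he).1)).symm)
  calc Sval N M E ≤ N * (M * numE M E) := hstep
  _ ≤ N * (M * (K * N)) :=
      Nat.mul_le_mul_left _ (Nat.mul_le_mul_left _ (numE_le hI))
/-! ### Per-operation lemmas -/

theorem inDeg_insert' {E : Finset (ℕ × ℕ)} {p c : ℕ} (h : (p, c) ∉ E) (w : ℕ) :
    inDeg (insert (p, c) E) w = inDeg E w + if c = w then 1 else 0 := inDeg_insert h w

theorem inDeg_erase' {E : Finset (ℕ × ℕ)} {p c : ℕ} (h : (p, c) ∈ E) (w : ℕ) :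
    inDeg E w = inDeg (E.erase (p, c)) w + if c = w then 1 else 0 := inDeg_erase h w

theorem outDeg_insert' {E : Finset (ℕ × ℕ)} {p c : ℕ} (h : (p, c) ∉ E) (w : ℕ) :
    outDeg (insert (p, c) E) w = outDeg E w + if p = w then 1 else 0 := outDeg_insert h w

theorem outDeg_erase' {E : Finset (ℕ × ℕ)} {p c : ℕ} (h : (p, c) ∈ E) (w : ℕ) :
    outDeg E w = outDeg (E.erase (p, c)) w + if p = w then 1 else 0 := outDeg_erase h w

theorem hasIn_elim {E : Cfg} {i u : ℕ} (h : ¬ HasIn E i u) :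
    (∀ w, (w, u) ∉ E i) ∧ u ≠ i := by
  rw [HasIn] at h
  push_neg at h
  exact ⟨h.1, h.2⟩

theorem sum_update_one {M : ℕ} {g g' : ℕ → ℕ} {i : ℕ} (hi : i ∈ R M) (δ : ℕ)
    (h : ∀ l ∈ R M, g' l = g l + if l = i then δ else 0) :
    ∑ l ∈ R M, g' l = (∑ l ∈ R M, g l) + δ := by
  rw [Finset.sum_congr rfl h, Finset.sum_add_distrib, Finset.sum_ite_eq' (R M) i (fun _ => δ),
    if_pos hi]

theorem incCount_eq {M : ℕ} {E : Cfg} (u : ℕ) :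
    incCount M E u = (∑ i ∈ R M, inDeg (E i) u) + (if u ∈ R M then 1 else 0) := rfl

theorem step_add {N M K : ℕ} {E : Cfg} {dbar : ℕ → ℕ} {up u i : ℕ}
    (hI : Inv N M K E) (h : AddApp N M K E dbar up u i) :
    Inv N M K (doAdd E up u i) ∧ numE M (doAdd E up u i) = numE M E + 1 := by
  obtain ⟨hi, hupV, huV, hinc, hnoin, hhas, hdcap⟩ := h
  obtain ⟨hval, hdeg1, hroot, hincK⟩ := hI
  obtain ⟨hnoinw, hui⟩ := hasIn_elim hnoin
  have hupu : up ≠ u := by rintro rfl; exact hnoin hhas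
  have hnew : (up, u) ∉ E i := hnoinw up
  have hEd : ∀ l, doAdd E up u i l = if l = i then insert (up, u) (E l) else E l := fun l => rfl
  have hsame : ∀ l, l ≠ i → doAdd E up u i l = E l := by
    intro l hl; rw [hEd, if_neg hl]
  have hEi : doAdd E up u i i = insert (up, u) (E i) := by rw [hEd, if_pos rfl]
  have hindeg : ∀ l ∈ R M, ∀ w, inDeg (doAdd E up u i l) w
      = inDeg (E l) w + if l = i then (if u = w then 1 else 0) else 0 := by
    intro l _ w
    by_cases hl : l = i
    · subst hl; rw [hEi, inDeg_insert hnew w, if_pos rfl]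
    · rw [hsame l hl, if_neg hl, add_zero]
  refine ⟨⟨?_, ?_, ?_, ?_⟩, ?_⟩
  · -- ValidEdges
    intro l hl e he
    by_cases hli : l = i
    · subst hli
      rw [hEi] at he
      rcases Finset.mem_insert.mp he with rfl | he
      · exact ⟨hupV, huV, hupu⟩
      · exact hval l hl e he
    · rw [hsame l hli] at he; exact hval l hl e he
  · -- inDeg ≤ 1
    intro l hl w
    rw [hindeg l hl w]
    by_cases hli : l = i
    · subst hli
      by_cases huw : u = w
      · subst huw
        have : inDeg (E l) u = 0 := by
          rw [inDeg, Finset.card_eq_zero, Finset.filter_eq_empty_iff]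
          intro e he hee
          exact hnoinw e.1 (by rwa [show e = (e.1, u) from Prod.ext rfl hee] at he)
        simp [this]
      · simp [huw, hdeg1 l hl w]
    · simp [hli, hdeg1 l hl w]
  · -- roots
    intro l hl
    rw [hindeg l hl l, hroot l hl]
    by_cases hli : l = i
    · subst hli; simp [hui]
    · simp [hli]
  · -- incCount
    intro w
    have hsum : (∑ l ∈ R M, inDeg (doAdd E up u i l) w)
        = (∑ l ∈ R M, inDeg (E l) w) + (if u = w then 1 else 0) :=
      sum_update_one hi _ (fun l hl => hindeg l hl w)
    rw [hsum]
    by_cases huw : u = w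
    · subst huw
      rw [incCount_eq] at hinc
      rw [if_pos rfl]
      omega
    · rw [if_neg huw, add_zero]
      exact hincK w
  · -- numE
    refine sum_update_one hi 1 (fun l hl => ?_)
    by_cases hli : l = i
    · subst hli
      rw [hEi, if_pos rfl, Finset.card_insert_of_notMem hnew]
    · rw [hsame l hli, if_neg hli, add_zero]
theorem step_insert {N M K : ℕ} {E : Cfg} {up u uc i : ℕ}
    (hI : Inv N M K E) (h : InsertApp N M K E up u uc i) :
    Inv N M K (doInsert E up u uc i) ∧ numE M (doInsert E up u uc i) = numE M E + 1 := by
  obtain ⟨hi, hupV, huV, hinc, hnoin, hhas, hupuc⟩ := h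
  obtain ⟨hval, hdeg1, hroot, hincK⟩ := hI
  obtain ⟨hnoinw, hui⟩ := hasIn_elim hnoin
  have hupu : up ≠ u := by rintro rfl; exact hnoin hhas
  have hucuniq : ∀ w, (w, uc) ∈ E i → w = up := parent_unique (hdeg1 i hi uc) hupuc
  have huuc : u ≠ uc := by
    rintro rfl
    exact hnoin (Or.inl ⟨up, hupuc⟩)
  have hucV : uc ∈ V N := (hval i hi _ hupuc).2.1
  set A := (E i).erase (up, uc) with hA
  have hn1 : (u, uc) ∉ A := by
    intro hc
    exact hupu.symm (hucuniq u (Finset.mem_of_mem_erase hc))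
  have hn2 : (up, u) ∉ insert (u, uc) A := by
    intro hc
    rcases Finset.mem_insert.mp hc with hc | hc
    · exact hupu (congrArg Prod.fst hc)
    · exact hnoinw up (Finset.mem_of_mem_erase hc)
  have hEi : doInsert E up u uc i i = insert (up, u) (insert (u, uc) A) := by
    rw [doInsert]; simp [hA]
  have hsame : ∀ l, l ≠ i → doInsert E up u uc i l = E l := by
    intro l hl; rw [doInsert]; simp [hl]
  have hindeg : ∀ l ∈ R M, ∀ w, inDeg (doInsert E up u uc i l) w
      = inDeg (E l) w + if l = i then (if u = w then 1 else 0) else 0 := by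
    intro l _ w
    by_cases hl : l = i
    · subst hl
      rw [hEi, inDeg_insert hn2 w, inDeg_insert hn1 w, if_pos rfl]
      have : inDeg (E l) w = inDeg A w + if uc = w then 1 else 0 := inDeg_erase hupuc w
      rw [this]
      try ring
    · rw [hsame l hl, if_neg hl, add_zero]
  refine ⟨⟨?_, ?_, ?_, ?_⟩, ?_⟩
  · -- ValidEdges
    intro l hl e he
    by_cases hli : l = i
    · subst hli
      rw [hEi] at he
      rcases Finset.mem_insert.mp he with rfl | he
      · exact ⟨hupV, huV, hupu⟩
      rcases Finset.mem_insert.mp he with rfl | he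
      · exact ⟨huV, hucV, huuc⟩
      · exact hval l hl e (Finset.mem_of_mem_erase he)
    · rw [hsame l hli] at he; exact hval l hl e he
  · -- inDeg ≤ 1
    intro l hl w
    rw [hindeg l hl w]
    by_cases hli : l = i
    · subst hli
      by_cases huw : u = w
      · subst huw
        have : inDeg (E l) u = 0 := by
          rw [inDeg, Finset.card_eq_zero, Finset.filter_eq_empty_iff]
          intro e he hee
          exact hnoinw e.1 (by rwa [show e = (e.1, u) from Prod.ext rfl hee] at he)
        simp [this]
      · simp [huw, hdeg1 l hl w]
    · simp [hli, hdeg1 l hl w]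
  · -- roots
    intro l hl
    rw [hindeg l hl l, hroot l hl]
    by_cases hli : l = i
    · subst hli; simp [hui]
    · simp [hli]
  · -- incCount
    intro w
    have hsum : (∑ l ∈ R M, inDeg (doInsert E up u uc i l) w)
        = (∑ l ∈ R M, inDeg (E l) w) + (if u = w then 1 else 0) :=
      sum_update_one hi _ (fun l hl => hindeg l hl w)
    rw [hsum]
    by_cases huw : u = w
    · subst huw
      rw [incCount_eq] at hinc
      rw [if_pos rfl]
      omega
    · rw [if_neg huw, add_zero]
      exact hincK w
  · -- numE
    refine sum_update_one hi 1 (fun l hl => ?_)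
    by_cases hli : l = i
    · subst hli
      rw [hEi, if_pos rfl, Finset.card_insert_of_notMem hn2,
        Finset.card_insert_of_notMem hn1, hA, Finset.card_erase_of_mem hupuc]
      have : 0 < (E l).card := Finset.card_pos.mpr ⟨_, hupuc⟩
      omega
    · rw [hsame l hli, if_neg hli, add_zero]
theorem tmin_lt_goal {N : ℕ} {F : Finset (ℕ × ℕ)} {r w v : ℕ}
    (hrV : r ∈ V N) (hT : ∀ e ∈ F, e.2 ∈ V N) (hwV : w ∈ V N)
    {d' : ℕ∞} (hd' : d' ≤ depth F r v + 1) (hlt : depth F r v + 1 < depth F r w) :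
    tmin N d' < tmin N (depth F r w) := by
  have hVcard : (((V N).card : ℕ) : ℕ∞) = (N : ℕ∞) := by rw [V_card]
  by_cases htop : depth F r w = ⊤
  · have hvne : depth F r v ≠ ⊤ := by
      intro hh
      rw [hh, top_add] at hlt
      exact not_top_lt hlt
    have hbound := depth_add_one_lt_of_unreached hrV hT hvne hwV htop
    rw [hVcard] at hbound
    exact tmin_lt (lt_of_le_of_lt hd' hlt) (lt_of_le_of_lt hd' hbound)
  · have hwlt : depth F r w < (N : ℕ∞) := by
      have := depth_lt_card hrV hT htop
      rwa [hVcard] at this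
    exact tmin_lt (lt_of_le_of_lt hd' hlt) (lt_trans (lt_of_le_of_lt hd' hlt) hwlt)

theorem step_jump {N M K : ℕ} {E : Cfg} {dbar : ℕ → ℕ} {up u v i : ℕ} (hMN : M ≤ N)
    (hI : Inv N M K E) (hmem : (up, u) ∈ E i) (h : JumpApp M E dbar u v i) :
    Inv N M K (doJump E up u v i) ∧ numE M (doJump E up u v i) = numE M E ∧
      Yval N M (doJump E up u v i) < Yval N M E := by
  obtain ⟨hi, -, havail, hhasv, hdlt⟩ := h
  obtain ⟨hval, hdeg1, hroot, hincK⟩ := hI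
  have huniq : ∀ w, (w, u) ∈ E i → w = up := parent_unique (hdeg1 i hi u) hmem
  have hui : u ≠ i := fun hh => not_mem_of_inDeg_zero (hroot i hi) up (hh ▸ hmem)
  have hdequ : depth (E i) i u = depth (E i) i up + 1 := depth_parent_unique hmem huniq hui
  have hvup : depth (E i) i v < depth (E i) i up :=
    enat_lt_of_add_one_lt_add_one (hdequ ▸ hdlt)
  have hvu : depth (E i) i v < depth (E i) i u := lt_of_le_of_lt le_self_add hdlt
  have hvne_up : v ≠ up := by
    intro hh; rw [hh] at hvup; exact lt_irrefl _ hvup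
  have hvu_ne : v ≠ u := by
    intro hh; rw [hh] at hvu; exact lt_irrefl _ hvu
  have hvV : v ∈ V N := by
    rcases hhasv with ⟨w, hw⟩ | rfl
    · exact (hval i hi _ hw).2.1
    · exact R_subset_V hMN hi
  have huV : u ∈ V N := (hval i hi _ hmem).2.1
  have hiV : i ∈ V N := R_subset_V hMN hi
  have hT : ∀ e ∈ E i, e.2 ∈ V N := fun e he => (hval i hi e he).2.1
  have hnotin : (v, u) ∉ (E i).erase (up, u) := fun hc =>
    hvne_up (huniq v (Finset.mem_of_mem_erase hc))
  have hEi : doJump E up u v i i = insert (v, u) ((E i).erase (up, u)) := by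
    rw [doJump]; simp
  have hsame : ∀ l, l ≠ i → doJump E up u v i l = E l := by
    intro l hl; rw [doJump]; simp [hl]
  have hindeg : ∀ l ∈ R M, ∀ w, inDeg (doJump E up u v i l) w = inDeg (E l) w := by
    intro l _ w
    by_cases hl : l = i
    · subst hl
      rw [hEi, inDeg_insert' hnotin w]
      have h2 : inDeg (E l) w = inDeg ((E l).erase (up, u)) w + if u = w then 1 else 0 :=
        inDeg_erase' hmem w
      omega
    · rw [hsame l hl]
  have hrep : ∀ w, depth (doJump E up u v i i) i w ≤ depth (E i) i w := by
    intro w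
    rw [hEi]
    exact reparent_le hmem hvup.le w
  refine ⟨⟨?_, ?_, ?_, ?_⟩, ?_, ?_⟩
  · -- ValidEdges
    intro l hl e he
    by_cases hli : l = i
    · subst hli
      rw [hEi] at he
      rcases Finset.mem_insert.mp he with rfl | he
      · exact ⟨hvV, huV, hvu_ne⟩
      · exact hval l hl e (Finset.mem_of_mem_erase he)
    · rw [hsame l hli] at he; exact hval l hl e he
  · intro l hl w
    rw [hindeg l hl w]; exact hdeg1 l hl w
  · intro l hl
    rw [hindeg l hl l]; exact hroot l hl
  · intro w
    have hsum : (∑ l ∈ R M, inDeg (doJump E up u v i l) w) = ∑ l ∈ R M, inDeg (E l) w :=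
      Finset.sum_congr rfl (fun l hl => hindeg l hl w)
    rw [hsum]
    exact hincK w
  · -- numE
    refine Finset.sum_congr rfl (fun l hl => ?_)
    by_cases hli : l = i
    · subst hli
      rw [hEi, Finset.card_insert_of_notMem hnotin, Finset.card_erase_of_mem hmem]
      have : 0 < (E l).card := Finset.card_pos.mpr ⟨_, hmem⟩
      omega
    · rw [hsame l hli]
  · -- Yval
    refine Yval_lt_col hi (fun l _ hl => hsame l hl) ?_
    refine Finset.sum_lt_sum (fun w _ => tmin_mono (hrep w)) ⟨u, huV, ?_⟩
    refine tmin_lt_goal hiV hT huV ?_ hdlt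
    have h1 : depth (doJump E up u v i i) i u
        ≤ depth (doJump E up u v i i) i v + 1 := by
      refine depth_child ?_
      rw [hEi]
      exact Finset.mem_insert_self _ _
    exact le_trans h1 (add_le_add_left (hrep v) 1)
theorem step_leafswap {N M K : ℕ} {E : Cfg} {up u vp v i : ℕ} (hMN : M ≤ N)
    (hI : Inv N M K E) (hmemu : (up, u) ∈ E i) (hmemv : (vp, v) ∈ E i)
    (h : LeafSwapApp M E u v i) :
    Inv N M K (doLeafSwap E up u vp v i) ∧ numE M (doLeafSwap E up u vp v i) = numE M E ∧
      Yval N M (doLeafSwap E up u vp v i) < Yval N M E := by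
  obtain ⟨hi, -, -, houtv, houtu, hd⟩ := h
  obtain ⟨hval, hdeg1, hroot, hincK⟩ := hI
  have huniqU : ∀ w, (w, u) ∈ E i → w = up := parent_unique (hdeg1 i hi u) hmemu
  have huniqV : ∀ w, (w, v) ∈ E i → w = vp := parent_unique (hdeg1 i hi v) hmemv
  have hui : u ≠ i := fun hh => not_mem_of_inDeg_zero (hroot i hi) up (hh ▸ hmemu)
  have hvi : v ≠ i := fun hh => not_mem_of_inDeg_zero (hroot i hi) vp (hh ▸ hmemv)
  have hleaf : ∀ c, (v, c) ∉ E i := not_mem_of_outDeg_zero houtv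
  have huv : u ≠ v := by intro hh; rw [hh] at hd; exact lt_irrefl _ hd
  have hup_ne_v : up ≠ v := fun hh => hleaf u (hh ▸ hmemu)
  have hdequ : depth (E i) i u = depth (E i) i up + 1 := depth_parent_unique hmemu huniqU hui
  have hdeqv : depth (E i) i v = depth (E i) i vp + 1 := depth_parent_unique hmemv huniqV hvi
  have hvp_ne_u : vp ≠ u := by
    intro hh
    rw [hh] at hdeqv
    rw [hdeqv] at hd
    exact absurd hd (not_lt.mpr le_self_add)
  have hvp_ne_v : vp ≠ v := (hval i hi _ hmemv).2.2
  have hup_ne_u : up ≠ u := (hval i hi _ hmemu).2.2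
  obtain ⟨uc, hmemuc⟩ := exists_child_of_outDeg_pos houtu
  have hu_ne_uc : u ≠ uc := (hval i hi _ hmemuc).2.2
  have huc_ne_v : uc ≠ v := by
    intro hh
    subst hh
    exact hvp_ne_u (huniqV u hmemuc).symm
  have huniqUC : ∀ w, (w, uc) ∈ E i → w = u := parent_unique (hdeg1 i hi uc) hmemuc
  have huci : uc ≠ i := fun hh => not_mem_of_inDeg_zero (hroot i hi) u (hh ▸ hmemuc)
  have hdequc : depth (E i) i uc = depth (E i) i u + 1 := depth_parent_unique hmemuc huniqUC huci
  have huV : u ∈ V N := (hval i hi _ hmemu).2.1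
  have hvV : v ∈ V N := (hval i hi _ hmemv).2.1
  have hucV : uc ∈ V N := (hval i hi _ hmemuc).2.1
  have hupV : up ∈ V N := (hval i hi _ hmemu).1
  have hvpV : vp ∈ V N := (hval i hi _ hmemv).1
  have hiV : i ∈ V N := R_subset_V hMN hi
  have hT : ∀ e ∈ E i, e.2 ∈ V N := fun e he => (hval i hi e he).2.1
  set A := ((E i).erase (up, u)).erase (vp, v) with hA
  have hmemv' : (vp, v) ∈ (E i).erase (up, u) :=
    Finset.mem_erase.mpr ⟨fun hh => huv.symm (congrArg Prod.snd hh), hmemv⟩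
  have hn1 : (vp, u) ∉ A := by
    intro hc
    have h2 := Finset.mem_of_mem_erase hc
    have h3 := (Finset.mem_erase.mp h2).1
    exact h3 (by rw [huniqU vp (Finset.mem_of_mem_erase h2)])
  have hn2 : (up, v) ∉ insert (vp, u) A := by
    intro hc
    rcases Finset.mem_insert.mp hc with hc | hc
    · exact huv.symm (congrArg Prod.snd hc)
    · have h2 := (Finset.mem_erase.mp hc).1
      have h3 := Finset.mem_of_mem_erase (Finset.mem_of_mem_erase hc)
      exact h2 (by rw [huniqV up h3])
  have hEi : doLeafSwap E up u vp v i i = insert (up, v) (insert (vp, u) A) := by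
    rw [doLeafSwap]; simp [hA]
  have hsame : ∀ l, l ≠ i → doLeafSwap E up u vp v i l = E l := by
    intro l hl; rw [doLeafSwap]; simp [hl]
  have hindeg : ∀ l ∈ R M, ∀ w, inDeg (doLeafSwap E up u vp v i l) w = inDeg (E l) w := by
    intro l _ w
    by_cases hl : l = i
    · subst hl
      rw [hEi, inDeg_insert' hn2 w, inDeg_insert' hn1 w]
      have e1 : inDeg (E l) w = inDeg ((E l).erase (up, u)) w + if u = w then 1 else 0 :=
        inDeg_erase' hmemu w
      have e2 : inDeg ((E l).erase (up, u)) w = inDeg A w + if v = w then 1 else 0 :=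
        inDeg_erase' hmemv' w
      omega
    · rw [hsame l hl]
  have hmemuc' : (u, uc) ∈ doLeafSwap E up u vp v i i := by
    rw [hEi]
    refine Finset.mem_insert_of_mem (Finset.mem_insert_of_mem ?_)
    refine Finset.mem_erase.mpr ⟨fun hh => huc_ne_v (congrArg Prod.snd hh), ?_⟩
    exact Finset.mem_erase.mpr ⟨fun hh => hu_ne_uc.symm (congrArg Prod.snd hh), hmemuc⟩
  have hsw : ∀ w, w ≠ v → depth (doLeafSwap E up u vp v i i) i w ≤ depth (E i) i w := by
    intro w hw
    rw [hEi]
    exact leafswap_le hmemu hmemv huniqV hleaf hd hvi w hw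
  have h'u : depth (doLeafSwap E up u vp v i i) i u ≤ depth (E i) i v := by
    have h1 : depth (doLeafSwap E up u vp v i i) i u
        ≤ depth (doLeafSwap E up u vp v i i) i vp + 1 := by
      refine depth_child ?_
      rw [hEi]
      exact Finset.mem_insert_of_mem (Finset.mem_insert_self _ _)
    calc depth (doLeafSwap E up u vp v i i) i u
        ≤ depth (doLeafSwap E up u vp v i i) i vp + 1 := h1
    _ ≤ depth (E i) i vp + 1 := add_le_add_left (hsw vp hvp_ne_v) 1
    _ = depth (E i) i v := hdeqv.symm
  have h'v : depth (doLeafSwap E up u vp v i i) i v ≤ depth (E i) i u := by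
    have h1 : depth (doLeafSwap E up u vp v i i) i v
        ≤ depth (doLeafSwap E up u vp v i i) i up + 1 := by
      refine depth_child ?_
      rw [hEi]
      exact Finset.mem_insert_self _ _
    calc depth (doLeafSwap E up u vp v i i) i v
        ≤ depth (doLeafSwap E up u vp v i i) i up + 1 := h1
    _ ≤ depth (E i) i up + 1 := add_le_add_left (hsw up hup_ne_v) 1
    _ = depth (E i) i u := hdequ.symm
  refine ⟨⟨?_, ?_, ?_, ?_⟩, ?_, ?_⟩
  · -- ValidEdges
    intro l hl e he
    by_cases hli : l = i
    · subst hli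
      rw [hEi] at he
      rcases Finset.mem_insert.mp he with rfl | he
      · exact ⟨hupV, hvV, hup_ne_v⟩
      rcases Finset.mem_insert.mp he with rfl | he
      · exact ⟨hvpV, huV, hvp_ne_u⟩
      · exact hval l hl e (Finset.mem_of_mem_erase (Finset.mem_of_mem_erase he))
    · rw [hsame l hli] at he; exact hval l hl e he
  · intro l hl w
    rw [hindeg l hl w]; exact hdeg1 l hl w
  · intro l hl
    rw [hindeg l hl l]; exact hroot l hl
  · intro w
    have hsum : (∑ l ∈ R M, inDeg (doLeafSwap E up u vp v i l) w) = ∑ l ∈ R M, inDeg (E l) w :=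
      Finset.sum_congr rfl (fun l hl => hindeg l hl w)
    rw [hsum]
    exact hincK w
  · -- numE
    refine Finset.sum_congr rfl (fun l hl => ?_)
    by_cases hli : l = i
    · subst hli
      rw [hEi, Finset.card_insert_of_notMem hn2, Finset.card_insert_of_notMem hn1, hA,
        Finset.card_erase_of_mem hmemv', Finset.card_erase_of_mem hmemu]
      have c1 : 0 < (E l).card := Finset.card_pos.mpr ⟨_, hmemu⟩
      have c2 : 0 < ((E l).erase (up, u)).card := Finset.card_pos.mpr ⟨_, hmemv'⟩
      rw [Finset.card_erase_of_mem hmemu] at c2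
      omega
    · rw [hsame l hli]
  · -- Yval
    refine Yval_lt_col hi (fun l _ hl => hsame l hl) ?_
    refine sum_swap_lt huV hvV hucV huv (fun hh => hu_ne_uc hh.symm) huc_ne_v
      (fun w _ _ hw2 => tmin_mono (hsw w hw2)) (tmin_mono h'u) (tmin_mono h'v) ?_
    refine tmin_lt_goal hiV hT hucV (v := v) ?_ ?_
    · calc depth (doLeafSwap E up u vp v i i) i uc
          ≤ depth (doLeafSwap E up u vp v i i) i u + 1 := depth_child hmemuc'
      _ ≤ depth (E i) i v + 1 := add_le_add_left h'u 1
    · rw [hdequc]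
      exact enat_add_one_lt_add_one hd
theorem step_mixswap {N M K : ℕ} {E : Cfg} {u uc v vc i j : ℕ} (hMN : M ≤ N)
    (hI : Inv N M K E) (h : MixSwapApp M E u uc v vc i j) :
    Inv N M K (doMixSwap E u uc v vc i j) ∧
      numE M (doMixSwap E u uc v vc i j) = numE M E ∧
      (Yval N M (doMixSwap E u uc v vc i j) < Yval N M E ∨
        (Yval N M (doMixSwap E u uc v vc i j) ≤ Yval N M E ∧
          Sval N M E < Sval N M (doMixSwap E u uc v vc i j))) := by
  obtain ⟨hi, hj, hij, huv, hmi, hmj, hucv, hvcu, hdiv, hdju, hdisj⟩ := h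
  obtain ⟨hval, hdeg1, hroot, hincK⟩ := hI
  have hEi : doMixSwap E u uc v vc i j i = insert (v, uc) ((E i).erase (u, uc)) := by
    rw [doMixSwap]; simp
  have hEj : doMixSwap E u uc v vc i j j = insert (u, vc) ((E j).erase (v, vc)) := by
    rw [doMixSwap]; simp [Ne.symm hij]
  have hsame : ∀ l, l ≠ i → l ≠ j → doMixSwap E u uc v vc i j l = E l := by
    intro l h1 h2; rw [doMixSwap]; simp [h1, h2]
  have huniqUC : ∀ w, (w, uc) ∈ E i → w = u := parent_unique (hdeg1 i hi uc) hmi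
  have huniqVC : ∀ w, (w, vc) ∈ E j → w = v := parent_unique (hdeg1 j hj vc) hmj
  have huci : uc ≠ i := fun hh => not_mem_of_inDeg_zero (hroot i hi) u (hh ▸ hmi)
  have hvcj : vc ≠ j := fun hh => not_mem_of_inDeg_zero (hroot j hj) v (hh ▸ hmj)
  have hn_i : (v, uc) ∉ (E i).erase (u, uc) := fun hc =>
    huv.symm (huniqUC v (Finset.mem_of_mem_erase hc))
  have hn_j : (u, vc) ∉ (E j).erase (v, vc) := fun hc =>
    huv (huniqVC u (Finset.mem_of_mem_erase hc))
  have hdequc : depth (E i) i uc = depth (E i) i u + 1 := depth_parent_unique hmi huniqUC huci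
  have hdeqvc : depth (E j) j vc = depth (E j) j v + 1 := depth_parent_unique hmj huniqVC hvcj
  have huV : u ∈ V N := (hval i hi _ hmi).1
  have hvV : v ∈ V N := (hval j hj _ hmj).1
  have hucV : uc ∈ V N := (hval i hi _ hmi).2.1
  have hvcV : vc ∈ V N := (hval j hj _ hmj).2.1
  have hiV : i ∈ V N := R_subset_V hMN hi
  have hjV : j ∈ V N := R_subset_V hMN hj
  have hTi : ∀ e ∈ E i, e.2 ∈ V N := fun e he => (hval i hi e he).2.1
  have hTj : ∀ e ∈ E j, e.2 ∈ V N := fun e he => (hval j hj e he).2.1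
  have hindeg : ∀ l ∈ R M, ∀ w, inDeg (doMixSwap E u uc v vc i j l) w = inDeg (E l) w := by
    intro l _ w
    by_cases hl : l = i
    · subst hl
      rw [hEi, inDeg_insert' hn_i w]
      have e1 : inDeg (E l) w = inDeg ((E l).erase (u, uc)) w + if uc = w then 1 else 0 :=
        inDeg_erase' hmi w
      omega
    by_cases hl2 : l = j
    · subst hl2
      rw [hEj, inDeg_insert' hn_j w]
      have e1 : inDeg (E l) w = inDeg ((E l).erase (v, vc)) w + if vc = w then 1 else 0 :=
        inDeg_erase' hmj w
      omega
    · rw [hsame l hl hl2]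
  have hrepi : ∀ w, depth (doMixSwap E u uc v vc i j i) i w ≤ depth (E i) i w := by
    intro w; rw [hEi]; exact reparent_le hmi hdiv w
  have hrepj : ∀ w, depth (doMixSwap E u uc v vc i j j) j w ≤ depth (E j) j w := by
    intro w; rw [hEj]; exact reparent_le hmj hdju w
  have hcoli_le : (∑ w ∈ V N, tmin N (depth (doMixSwap E u uc v vc i j i) i w))
      ≤ ∑ w ∈ V N, tmin N (depth (E i) i w) :=
    Finset.sum_le_sum (fun w _ => tmin_mono (hrepi w))
  have hcolj_le : (∑ w ∈ V N, tmin N (depth (doMixSwap E u uc v vc i j j) j w))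
      ≤ ∑ w ∈ V N, tmin N (depth (E j) j w) :=
    Finset.sum_le_sum (fun w _ => tmin_mono (hrepj w))
  refine ⟨⟨?_, ?_, ?_, ?_⟩, ?_, ?_⟩
  · -- ValidEdges
    intro l hl e he
    by_cases hli : l = i
    · subst hli
      rw [hEi] at he
      rcases Finset.mem_insert.mp he with rfl | he
      · exact ⟨hvV, hucV, Ne.symm hucv⟩
      · exact hval l hl e (Finset.mem_of_mem_erase he)
    by_cases hlj : l = j
    · subst hlj
      rw [hEj] at he
      rcases Finset.mem_insert.mp he with rfl | he
      · exact ⟨huV, hvcV, Ne.symm hvcu⟩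
      · exact hval l hl e (Finset.mem_of_mem_erase he)
    · rw [hsame l hli hlj] at he; exact hval l hl e he
  · intro l hl w
    rw [hindeg l hl w]; exact hdeg1 l hl w
  · intro l hl
    rw [hindeg l hl l]; exact hroot l hl
  · intro w
    have hsum : (∑ l ∈ R M, inDeg (doMixSwap E u uc v vc i j l) w)
        = ∑ l ∈ R M, inDeg (E l) w :=
      Finset.sum_congr rfl (fun l hl => hindeg l hl w)
    rw [hsum]
    exact hincK w
  · -- numE
    refine Finset.sum_congr rfl (fun l hl => ?_)
    by_cases hli : l = i
    · subst hli
      rw [hEi, Finset.card_insert_of_notMem hn_i, Finset.card_erase_of_mem hmi]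
      have : 0 < (E l).card := Finset.card_pos.mpr ⟨_, hmi⟩
      omega
    by_cases hlj : l = j
    · subst hlj
      rw [hEj, Finset.card_insert_of_notMem hn_j, Finset.card_erase_of_mem hmj]
      have : 0 < (E l).card := Finset.card_pos.mpr ⟨_, hmj⟩
      omega
    · rw [hsame l hli hlj]
  · -- Yval / Sval
    rcases hdisj with hne | hgt
    · -- strict depth decrease in one of the two colours
      left
      have hstrict : depth (E i) i v < depth (E i) i u ∨ depth (E j) j u < depth (E j) j v := by
        rcases lt_or_eq_of_le hdiv with h1 | h1
        · exact Or.inl h1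
        rcases lt_or_eq_of_le hdju with h2 | h2
        · exact Or.inr h2
        · exact absurd (by rw [← h1, h2]) hne
      rcases hstrict with hstr | hstr
      · refine Yval_lt_col2 hi hj (fun l _ h1 h2 => hsame l h1 h2) ?_ hcolj_le
        refine Finset.sum_lt_sum (fun w _ => tmin_mono (hrepi w)) ⟨uc, hucV, ?_⟩
        refine tmin_lt_goal hiV hTi hucV (v := v) ?_ ?_
        · calc depth (doMixSwap E u uc v vc i j i) i uc
              ≤ depth (doMixSwap E u uc v vc i j i) i v + 1 := by
                refine depth_child ?_
                rw [hEi]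
                exact Finset.mem_insert_self _ _
          _ ≤ depth (E i) i v + 1 := add_le_add_left (hrepi v) 1
        · rw [hdequc]
          exact enat_add_one_lt_add_one hstr
      · refine Yval_lt_col2 hj hi (fun l _ h1 h2 => hsame l h2 h1) ?_ hcoli_le
        refine Finset.sum_lt_sum (fun w _ => tmin_mono (hrepj w)) ⟨vc, hvcV, ?_⟩
        refine tmin_lt_goal hjV hTj hvcV (v := u) ?_ ?_
        · calc depth (doMixSwap E u uc v vc i j j) j vc
              ≤ depth (doMixSwap E u uc v vc i j j) j u + 1 := by
                refine depth_child ?_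
                rw [hEj]
                exact Finset.mem_insert_self _ _
          _ ≤ depth (E j) j u + 1 := add_le_add_left (hrepj u) 1
        · rw [hdeqvc]
          exact enat_add_one_lt_add_one hstr
    · -- tie case : S strictly increases
      right
      refine ⟨Yval_le_col2 hi hj (fun l _ h1 h2 => hsame l h1 h2) hcoli_le hcolj_le, ?_⟩
      have hodi : ∀ w, outDeg (doMixSwap E u uc v vc i j i) w + (if u = w then 1 else 0)
          = outDeg (E i) w + (if v = w then 1 else 0) := by
        intro w
        rw [hEi, outDeg_insert' hn_i w]
        have e1 : outDeg (E i) w = outDeg ((E i).erase (u, uc)) w + if u = w then 1 else 0 :=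
          outDeg_erase' hmi w
        omega
      have hodj : ∀ w, outDeg (doMixSwap E u uc v vc i j j) w + (if v = w then 1 else 0)
          = outDeg (E j) w + (if u = w then 1 else 0) := by
        intro w
        rw [hEj, outDeg_insert' hn_j w]
        have e1 : outDeg (E j) w = outDeg ((E j).erase (v, vc)) w + if v = w then 1 else 0 :=
          outDeg_erase' hmj w
        omega
      have hinner : ∀ w, (∑ l ∈ R M, l * outDeg (doMixSwap E u uc v vc i j l) w)
            + (i * (if u = w then 1 else 0) + j * (if v = w then 1 else 0))
          = (∑ l ∈ R M, l * outDeg (E l) w)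
            + (i * (if v = w then 1 else 0) + j * (if u = w then 1 else 0)) := by
        intro w
        have hterm : ∀ l ∈ R M,
            l * outDeg (doMixSwap E u uc v vc i j l) w
              + ((if l = i then i * (if u = w then 1 else 0) else 0)
                + (if l = j then j * (if v = w then 1 else 0) else 0))
            = l * outDeg (E l) w
              + ((if l = i then i * (if v = w then 1 else 0) else 0)
                + (if l = j then j * (if u = w then 1 else 0) else 0)) := by
          intro l _
          by_cases hli : l = i
          · rw [hli]
            have hmul : i * (outDeg (doMixSwap E u uc v vc i j i) w + (if u = w then 1 else 0))
                = i * (outDeg (E i) w + (if v = w then 1 else 0)) := by rw [hodi w]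
            rw [mul_add, mul_add] at hmul
            simp only [eq_self_iff_true, if_true, if_neg hij]
            omega
          by_cases hlj : l = j
          · rw [hlj]
            have hmul : j * (outDeg (doMixSwap E u uc v vc i j j) w + (if v = w then 1 else 0))
                = j * (outDeg (E j) w + (if u = w then 1 else 0)) := by rw [hodj w]
            rw [mul_add, mul_add] at hmul
            simp only [eq_self_iff_true, if_true, if_neg (Ne.symm hij)]
            omega
          · rw [hsame l hli hlj]
            simp [hli, hlj]
        have hsums := Finset.sum_congr rfl hterm
        rw [Finset.sum_add_distrib, Finset.sum_add_distrib, Finset.sum_add_distrib,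
          Finset.sum_add_distrib, Finset.sum_ite_eq' (R M) i, Finset.sum_ite_eq' (R M) j,
          Finset.sum_ite_eq' (R M) i, Finset.sum_ite_eq' (R M) j] at hsums
        simp only [if_pos hi, if_pos hj] at hsums
        exact hsums
      have hSeq : Sval N M (doMixSwap E u uc v vc i j) + (u * i + v * j)
          = Sval N M E + (v * i + u * j) := by
        have hterm : ∀ w ∈ V N,
            w * (∑ l ∈ R M, l * outDeg (doMixSwap E u uc v vc i j l) w)
              + ((if u = w then w * i else 0) + (if v = w then w * j else 0))
            = w * (∑ l ∈ R M, l * outDeg (E l) w)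
              + ((if v = w then w * i else 0) + (if u = w then w * j else 0)) := by
          intro w _
          have hmul := congrArg (w * ·) (hinner w)
          simp only [mul_add] at hmul
          by_cases h1 : u = w <;> by_cases h2 : v = w <;>
            simp only [h1, h2, if_true, if_false] at hmul ⊢ <;>
            simp [h1, h2, mul_comm, mul_left_comm] at hmul ⊢ <;> omega
        have hsums := Finset.sum_congr rfl hterm
        rw [Finset.sum_add_distrib, Finset.sum_add_distrib, Finset.sum_add_distrib,
          Finset.sum_add_distrib, Finset.sum_ite_eq (V N) u, Finset.sum_ite_eq (V N) v,
          Finset.sum_ite_eq (V N) u, Finset.sum_ite_eq (V N) v] at hsums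
        simp only [if_pos huV, if_pos hvV] at hsums
        rw [Sval, Sval]
        omega
      have hmulZ : u * i + v * j < u * j + v * i := by
        have : (u : ℤ) * i + v * j < u * j + v * i := by nlinarith [hgt]
        exact_mod_cast this
      omega
/-! ### The combined lexicographic measure -/

theorem measure_dec {B1 B2 B3 n n' y y' s s' : ℕ}
    (hn : n ≤ B1) (hn' : n' ≤ B1) (hy : y ≤ B2) (hy' : y' ≤ B2) (hs : s ≤ B3) (hs' : s' ≤ B3)
    (h : (n < n') ∨ (n' = n ∧ y' < y) ∨ (n' = n ∧ y' ≤ y ∧ s < s')) :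
    (B1 - n') * ((B2 + 1) * (B3 + 1)) + y' * (B3 + 1) + (B3 - s')
      < (B1 - n) * ((B2 + 1) * (B3 + 1)) + y * (B3 + 1) + (B3 - s) := by
  have hy'W : y' * (B3 + 1) ≤ B2 * (B3 + 1) := Nat.mul_le_mul_right _ hy'
  rcases h with h | ⟨he, h⟩ | ⟨he, hyle, h⟩
  · have e1 : (B1 - n') + 1 ≤ B1 - n := by omega
    have e2 : ((B1 - n') + 1) * ((B2 + 1) * (B3 + 1)) ≤ (B1 - n) * ((B2 + 1) * (B3 + 1)) :=
      Nat.mul_le_mul_right _ e1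
    have e3 : ((B1 - n') + 1) * ((B2 + 1) * (B3 + 1))
        = (B1 - n') * ((B2 + 1) * (B3 + 1)) + (B2 + 1) * (B3 + 1) := by ring
    have e4 : (B2 + 1) * (B3 + 1) = B2 * (B3 + 1) + B3 + 1 := by ring
    omega
  · subst he
    have e1 : (y' + 1) * (B3 + 1) ≤ y * (B3 + 1) := Nat.mul_le_mul_right _ h
    have e2 : (y' + 1) * (B3 + 1) = y' * (B3 + 1) + B3 + 1 := by ring
    omega
  · subst he
    rcases Nat.lt_or_ge y' y with hlt | hge
    · have e1 : (y' + 1) * (B3 + 1) ≤ y * (B3 + 1) := Nat.mul_le_mul_right _ hlt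
      have e2 : (y' + 1) * (B3 + 1) = y' * (B3 + 1) + B3 + 1 := by ring
      omega
    · have hyy : y' = y := by omega
      subst hyy
      omega

theorem step_progress {N M K : ℕ} {dbar : ℕ → ℕ} {E E' : Cfg} (hMN : M ≤ N)
    (hI : Inv N M K E) (hstep : Step N M K dbar E E') :
    Inv N M K E' ∧
      (numE M E < numE M E' ∨
        (numE M E' = numE M E ∧
          (Yval N M E' < Yval N M E ∨
            (Yval N M E' ≤ Yval N M E ∧ Sval N M E < Sval N M E')))) := by
  rcases hstep with ⟨up, u, i, happ, rfl⟩ | ⟨up, u, uc, i, happ, rfl⟩ |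
    ⟨up, u, v, i, hmem, happ, rfl⟩ | ⟨up, u, vp, v, i, hmemu, hmemv, happ, rfl⟩ |
    ⟨u, uc, v, vc, i, j, happ, rfl⟩
  · obtain ⟨h1, h2⟩ := step_add hI happ
    exact ⟨h1, Or.inl (by omega)⟩
  · obtain ⟨h1, h2⟩ := step_insert hI happ
    exact ⟨h1, Or.inl (by omega)⟩
  · obtain ⟨h1, h2, h3⟩ := step_jump hMN hI hmem happ
    exact ⟨h1, Or.inr ⟨h2, Or.inl h3⟩⟩
  · obtain ⟨h1, h2, h3⟩ := step_leafswap hMN hI hmemu hmemv happ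
    exact ⟨h1, Or.inr ⟨h2, Or.inl h3⟩⟩
  · obtain ⟨h1, h2, h3⟩ := step_mixswap hMN hI happ
    refine ⟨h1, Or.inr ⟨h2, ?_⟩⟩
    rcases h3 with h3 | h3
    · exact Or.inl h3
    · exact Or.inr h3
/-- starting from a Tree Initially configuration, there is no
infinite sequence of configurations in which each one is obtained from the
previous by an applicable Add, Insert, Jump, LeafSwap or MixSwap. -/
theorem no_infinite_update_sequence
    (N M K : ℕ) (hK : 0 < K) (hKM : K ≤ M) (hMN : M ≤ N)
    (dbar : ℕ → ℕ) (C : ℕ → Cfg)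
    (hvalid : ValidEdges N M (C 0)) (htree : TreeInit N M K (C 0)) :
    ¬ ∀ t : ℕ, Step N M K dbar (C t) (C (t + 1)) := by
  intro hstep
  set B1 := K * N with hB1
  set B2 := N * (M * N) with hB2
  set B3 := N * (M * (K * N)) with hB3
  set μ : Cfg → ℕ := fun E =>
    (B1 - numE M E) * ((B2 + 1) * (B3 + 1)) + Yval N M E * (B3 + 1) + (B3 - Sval N M E)
    with hμ
  have hInv : ∀ t, Inv N M K (C t) := by
    intro t
    induction t with
    | zero => exact Inv_init hMN hvalid htree
    | succ t ih => exact (step_progress hMN ih (hstep t)).1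
  have hdec : ∀ t, μ (C (t + 1)) < μ (C t) := by
    intro t
    have h := step_progress hMN (hInv t) (hstep t)
    refine measure_dec (numE_le (hInv t)) (numE_le h.1) (Yval_bound N M (C t))
      (Yval_bound N M (C (t + 1))) (Sval_bound (hInv t)) (Sval_bound h.1) ?_
    tauto
  have hchain : ∀ t, μ (C t) + t ≤ μ (C 0) := by
    intro t
    induction t with
    | zero => omega
    | succ t ih =>
        have := hdec t
        omega
  have := hchain (μ (C 0) + 1)
  omega

end P2P
end

section
/- Let V be a finite set with a distinguished root i, let E_i ⊆ V × V be a set of directed edges, let (u_p, u_c) ∈ E_i, and let u ∈ V be a node with u ≠ u_p and u ≠ u_c. Let E_i' = (E_i ∖ {(u_p, u_c)}) ∪ {(u_p, u), (u, u_c)}. Then every node reachable from i by a directed path in E_i is reachable from i by a directed path in E_i'; moreover, if u_p is reachable from i in E_i, then u is reachable from i in E_i'. -/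
namespace P2P

/-- `l` is a directed path from `r` to `u` in the edge set `E`: a nonempty list
of pairwise distinct vertices starting at `r`, ending at `u`, each consecutive
pair being an edge of `E`. (In particular `r` is reachable from itself via `[r]`.) -/
def IsPath {α : Type*} (E : Finset (α × α)) (r u : α) (l : List α) : Prop :=
  l.Chain' (fun a b => (a, b) ∈ E) ∧ l.Nodup ∧ l.head? = some r ∧ l.getLast? = some u

/-- `w` is reachable from `r` in `E`. -/
def Reach {α : Type*} (E : Finset (α × α)) (r w : α) : Prop :=
  ∃ l : List α, IsPath E r w l

/-- A walk (refl-trans closure step sequence) can be shortened to a duplicate-free path. -/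
lemma reach_of_rtg {α : Type*} [DecidableEq α] {E : Finset (α × α)} {r w : α}
    (h : Relation.ReflTransGen (fun a b => (a, b) ∈ E) r w) : Reach E r w := by
  induction h with
  | refl => exact ⟨[r], List.isChain_singleton r, List.nodup_singleton r, rfl, rfl⟩
  | @tail b c hbc hedge ih =>
    obtain ⟨l, hch, hnd, hhd, hlast⟩ := ih
    by_cases hc : c ∈ l
    · obtain ⟨t₁, t₂, rfl⟩ := List.append_of_mem hc
      refine ⟨t₁ ++ [c], hch.prefix ⟨t₂, by simp⟩, ?_, ?_, by simp⟩
      · exact hnd.sublist ((List.cons_sublist_cons.mpr (List.nil_sublist t₂)).append_left t₁)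
      · cases t₁ <;> simp_all
    · refine ⟨l ++ [c], ?_, ?_, ?_, by simp⟩
      · refine List.isChain_append.mpr ?_
        refine ⟨hch, List.isChain_singleton c, ?_⟩
        simp only [hlast, List.head?_cons, Option.mem_some_iff]
        rintro x rfl y rfl
        exact hedge
      · simpa [List.nodup_append] using ⟨hnd, fun a ha h => hc (h ▸ ha)⟩
      · cases l with
        | nil => simp at hhd
        | cons a t => simpa using hhd

/-- A path gives a walk. -/
lemma rtg_of_reach {α : Type*} {E : Finset (α × α)} {r w : α}
    (h : Reach E r w) : Relation.ReflTransGen (fun a b => (a, b) ∈ E) r w := by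
  obtain ⟨l, hch, -, hhd, hlast⟩ := h
  cases l with
  | nil => simp at hhd
  | cons a t =>
    have ha : a = r := by simpa using hhd
    subst ha
    refine List.relationReflTransGen_of_exists_isChain_cons t ?_ ?_
    · exact hch
    · have := hlast
      rw [List.getLast?_eq_getLast (List.cons_ne_nil _ _)] at this
      simpa using this

/-- replacing an edge `(u_p, u_c)` by the two edges `(u_p, u)` and
`(u, u_c)` preserves reachability from the root `i`, and makes `u` reachable
whenever `u_p` was. -/
theorem insert_preserves_reachability
    {α : Type*} [Fintype α] [DecidableEq α]
    (i : α) (Ei : Finset (α × α)) (up uc u : α)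
    (hedge : (up, uc) ∈ Ei) (hup : u ≠ up) (huc : u ≠ uc)
    (Ei' : Finset (α × α))
    (hEi' : Ei' = insert (up, u) (insert (u, uc) (Ei.erase (up, uc)))) :
    (∀ w : α, Reach Ei i w → Reach Ei' i w) ∧
    (Reach Ei i up → Reach Ei' i u) := by
  have hpu : (up, u) ∈ Ei' := by simp [hEi']
  have huc' : (u, uc) ∈ Ei' := by simp [hEi']
  have hstep : ∀ a b : α, (a, b) ∈ Ei →
      Relation.ReflTransGen (fun a b => (a, b) ∈ Ei') a b := by
    intro a b hab
    by_cases h : (a, b) = (up, uc)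
    · obtain ⟨rfl, rfl⟩ := Prod.mk.injEq .. ▸ h
      exact Relation.ReflTransGen.tail (Relation.ReflTransGen.single hpu) huc'
    · refine Relation.ReflTransGen.single ?_
      simp [hEi', Finset.mem_erase, h, hab]
  have hmain : ∀ w, Reach Ei i w → Relation.ReflTransGen (fun a b => (a, b) ∈ Ei') i w := by
    intro w hw
    have h := rtg_of_reach hw
    induction h with
    | refl => exact Relation.ReflTransGen.refl
    | @tail b c hbc hbc' ih => exact (ih (reach_of_rtg hbc)).trans (hstep _ _ hbc')
  refine ⟨fun w hw => reach_of_rtg (hmain w hw), fun hw => reach_of_rtg ?_⟩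
  exact Relation.ReflTransGen.tail (hmain up hw) hpu

end P2P
end

section
/- Let β > 0 be real, k ∈ ℕ, and let y_0, y_1, …, y_k : [0, ∞) → ℝ be differentiable functions satisfying y_0(0) = 1, y_m(0) ≥ 0 for all 0 ≤ m ≤ k, and y_m'(t) = β · max(1 + 2·y_{m−1}(t) − y_m(t), 0) for all t ≥ 0 and 0 ≤ m ≤ k, where y_{−1} denotes the identically zero function. Then for every 0 ≤ m ≤ k and every t ≥ 0, y_m(t) ≥ 2^{m+1} · (1 − e^{−βt} Σ_{p=0}^{m−1} (βt)^p / p!) − 1. -/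
open Finset Set

/-- Gronwall-type lemma: `h' ≥ -β h` on `Ici 0` and `h 0 ≥ 0` gives `h ≥ 0` on `Ici 0`. -/
lemma gronwall_nonneg (β : ℝ) {h h' : ℝ → ℝ}
    (hd : ∀ t ∈ Ici (0:ℝ), HasDerivWithinAt h (h' t) (Ici 0) t)
    (hle : ∀ t ∈ Ici (0:ℝ), -β * h t ≤ h' t) (h0 : 0 ≤ h 0) :
    ∀ t ∈ Ici (0:ℝ), 0 ≤ h t := by
  set φ : ℝ → ℝ := fun t => Real.exp (β * t) * h t with hφ
  have hφd : ∀ t ∈ Ici (0:ℝ), HasDerivWithinAt φ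
      (β * Real.exp (β * t) * h t + Real.exp (β * t) * h' t) (Ici 0) t := by
    intro t ht
    have h1 : HasDerivWithinAt (fun s => Real.exp (β * s)) (β * Real.exp (β * t)) (Ici 0) t := by
      simpa [mul_comm] using (((hasDerivAt_id t).const_mul β).exp).hasDerivWithinAt
    exact h1.mul (hd t ht)
  have hmono : MonotoneOn φ (Ici (0:ℝ)) := by
    apply monotoneOn_of_hasDerivWithinAt_nonneg (convex_Ici 0)
      (fun t ht => (hφd t ht).continuousWithinAt)
      (f' := fun t => β * Real.exp (β * t) * h t + Real.exp (β * t) * h' t)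
      (fun t ht => (hφd t (interior_subset ht)).mono interior_subset)
    intro t ht
    rw [interior_Ici] at ht
    have := hle t (mem_Ici.mpr (le_of_lt (mem_Ioi.mp ht)))
    nlinarith [Real.exp_pos (β * t), this]
  intro t ht
  have h1 : φ 0 ≤ φ t := hmono self_mem_Ici ht ht
  have h2 : (0:ℝ) ≤ φ t := by
    refine le_trans ?_ h1
    simp [hφ, h0]
  simp only [hφ] at h2
  have := Real.exp_pos (β * t)
  nlinarith [h2]

/-- derivative of the truncated exponential sum. -/
lemma hasDerivAt_P (β : ℝ) (m : ℕ) (t : ℝ) :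
    HasDerivAt (fun s => ∑ p ∈ Finset.range m, (β * s) ^ p / (Nat.factorial p))
      (β * ∑ p ∈ Finset.range (m - 1), (β * t) ^ p / (Nat.factorial p)) t := by
  cases m with
  | zero => simpa using (hasDerivAt_const t (0:ℝ))
  | succ n =>
    have hterm : ∀ p : ℕ, HasDerivAt (fun s => (β * s) ^ p / (Nat.factorial p))
        ((p : ℝ) * (β * t) ^ (p - 1) * β / (Nat.factorial p)) t := by
      intro p
      have h1 : HasDerivAt (fun s => β * s) β t := by
        simpa using (hasDerivAt_id t).const_mul β
      have h2 := (h1.pow p)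
      simpa [div_eq_mul_inv, mul_comm, mul_assoc, mul_left_comm] using h2.div_const (Nat.factorial p)
    have hsum := HasDerivAt.fun_sum (fun p _ => hterm p) (u := Finset.range (n+1))
    refine hsum.congr_deriv ?_
    symm
    rw [Finset.sum_range_succ']
    simp only [Nat.succ_sub_one]
    rw [Finset.mul_sum]
    simp only [Nat.cast_add, Nat.cast_one, Nat.add_sub_cancel, Nat.factorial_succ,
      Nat.cast_mul, pow_zero, Nat.factorial_zero]
    norm_num
    apply Finset.sum_congr rfl
    intro p _
    field_simp

lemma hasDerivAt_G (β : ℝ) (m : ℕ) (t : ℝ) :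
    HasDerivAt (fun s : ℝ => 2 ^ (m + 1) *
        (1 - Real.exp (-(β * s)) * ∑ p ∈ Finset.range m, (β * s) ^ p / (Nat.factorial p)) - 1)
      (2 ^ (m + 1) * β * Real.exp (-(β * t)) *
        ((∑ p ∈ Finset.range m, (β * t) ^ p / (Nat.factorial p))
          - ∑ p ∈ Finset.range (m - 1), (β * t) ^ p / (Nat.factorial p))) t := by
  have hlin : HasDerivAt (fun s : ℝ => -(β * s)) (-β) t := by
    simpa using ((hasDerivAt_id t).const_mul β).fun_neg
  have hE : HasDerivAt (fun s : ℝ => Real.exp (-(β * s))) (-β * Real.exp (-(β * t))) t := by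
    simpa [mul_comm] using hlin.exp
  have h2 := (((hE.mul (hasDerivAt_P β m t)).const_sub 1).const_mul ((2:ℝ) ^ (m + 1))).sub_const 1
  refine h2.congr_deriv ?_
  ring

lemma step_lemma (β : ℝ) (hβ : 0 < β) (ym py pg gm gm' : ℝ → ℝ)
    (hym : ∀ t ∈ Ici (0:ℝ), HasDerivWithinAt ym (β * max (1 + 2 * py t - ym t) 0) (Ici 0) t)
    (hgm : ∀ t ∈ Ici (0:ℝ), HasDerivWithinAt gm (gm' t) (Ici 0) t)
    (hid : ∀ t ∈ Ici (0:ℝ), gm' t = β * max (1 + 2 * pg t - gm t) 0)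
    (hnn : ∀ t ∈ Ici (0:ℝ), 0 ≤ 1 + 2 * pg t - gm t)
    (hprev : ∀ t ∈ Ici (0:ℝ), pg t ≤ py t)
    (h0 : gm 0 ≤ ym 0) :
    ∀ t ∈ Ici (0:ℝ), gm t ≤ ym t := by
  have key := gronwall_nonneg β (h := fun t => ym t - gm t)
    (h' := fun t => β * max (1 + 2 * py t - ym t) 0 - gm' t)
    (fun t ht => (hym t ht).sub (hgm t ht))
    (fun t ht => by
      have h1 : gm' t = β * (1 + 2 * pg t - gm t) := by
        rw [hid t ht, max_eq_left (hnn t ht)]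
      have h2 : 1 + 2 * pg t - ym t ≤ max (1 + 2 * py t - ym t) 0 := by
        have := hprev t ht
        exact le_trans (by linarith) (le_max_left _ _)
      simp only [h1]
      nlinarith [h2, hβ])
    (by simpa using h0)
  intro t ht
  have := key t ht
  simpa using this




/-- the solution of the ODE system
`y_m' = β·(1 + 2 y_{m−1} − y_m)⁺` on `[0, ∞)` with `y_0(0) = 1`, `y_m(0) ≥ 0`
and `y_{−1} ≡ 0` satisfies
`y_m(t) ≥ 2^{m+1}·(1 − e^{−βt} Σ_{p<m} (βt)^p/p!) − 1`. -/
theorem ode_lower_bound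
    (β : ℝ) (hβ : 0 < β) (k : ℕ) (y : ℕ → ℝ → ℝ)
    (hy00 : y 0 0 = 1)
    (hy0 : ∀ m ≤ k, 0 ≤ y m 0)
    (hode : ∀ m ≤ k, ∀ t ∈ Set.Ici (0 : ℝ),
      HasDerivWithinAt (y m)
        (β * max (1 + 2 * (if m = 0 then 0 else y (m - 1) t) - y m t) 0)
        (Set.Ici (0 : ℝ)) t) :
    ∀ m ≤ k, ∀ t ∈ Set.Ici (0 : ℝ),
      2 ^ (m + 1) *
          (1 - Real.exp (-(β * t)) *
            ∑ p ∈ Finset.range m, (β * t) ^ p / (Nat.factorial p)) - 1 ≤ y m t := by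
  set G : ℕ → ℝ → ℝ := fun m t => 2 ^ (m + 1) *
      (1 - Real.exp (-(β * t)) * ∑ p ∈ Finset.range m, (β * t) ^ p / (Nat.factorial p)) - 1
    with hG
  have hGd : ∀ m, ∀ t ∈ Ici (0:ℝ), HasDerivWithinAt (G m)
      (2 ^ (m + 1) * β * Real.exp (-(β * t)) *
        ((∑ p ∈ Finset.range m, (β * t) ^ p / (Nat.factorial p))
          - ∑ p ∈ Finset.range (m - 1), (β * t) ^ p / (Nat.factorial p))) (Ici 0) t :=
    fun m t _ => (hasDerivAt_G β m t).hasDerivWithinAt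
  -- the sum difference
  have hdiff : ∀ m : ℕ, ∀ t : ℝ, (∑ p ∈ Finset.range m, (β * t) ^ p / (Nat.factorial p))
      - (∑ p ∈ Finset.range (m - 1), (β * t) ^ p / (Nat.factorial p))
      = if m = 0 then 0 else (β * t) ^ (m - 1) / (Nat.factorial (m - 1)) := by
    intro m t
    cases m with
    | zero => simp
    | succ n => rw [Finset.sum_range_succ]; simp
  -- key algebraic identity: derivative of G equals the ODE RHS evaluated at G
  have hkey : ∀ m, ∀ t ∈ Ici (0:ℝ),
      1 + 2 * (if m = 0 then 0 else G (m - 1) t) - G m t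
        = 2 ^ (m + 1) * (Real.exp (-(β * t)) *
            ((∑ p ∈ Finset.range m, (β * t) ^ p / (Nat.factorial p))
              - ∑ p ∈ Finset.range (m - 1), (β * t) ^ p / (Nat.factorial p))) := by
    intro m t _
    cases m with
    | zero => simp [hG]; norm_num
    | succ n =>
      simp only [Nat.succ_ne_zero, if_false, hG, Nat.add_sub_cancel]
      rw [Finset.sum_range_succ]
      ring
  have hnn : ∀ m, ∀ t ∈ Ici (0:ℝ), 0 ≤ 1 + 2 * (if m = 0 then 0 else G (m - 1) t) - G m t := by
    intro m t ht
    rw [hkey m t ht, hdiff m t]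
    have hbt : 0 ≤ β * t := mul_nonneg hβ.le ht
    cases m with
    | zero => simp
    | succ n =>
      simp only [Nat.succ_ne_zero, if_false]
      positivity
  have hGid : ∀ m, ∀ t ∈ Ici (0:ℝ),
      2 ^ (m + 1) * β * Real.exp (-(β * t)) *
        ((∑ p ∈ Finset.range m, (β * t) ^ p / (Nat.factorial p))
          - ∑ p ∈ Finset.range (m - 1), (β * t) ^ p / (Nat.factorial p))
      = β * max (1 + 2 * (if m = 0 then 0 else G (m - 1) t) - G m t) 0 := by
    intro m t ht
    rw [max_eq_left (hnn m t ht), hkey m t ht]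
    ring
  -- value at 0
  have hsum0 : ∀ n : ℕ, (∑ p ∈ Finset.range (n + 1), (β * 0) ^ p / (Nat.factorial p)) = 1 := by
    intro n
    rw [Finset.sum_range_succ']
    simp
  intro m
  induction m with
  | zero =>
    intro hm t ht
    have := step_lemma β hβ (y 0) (fun _ => 0) (fun _ => 0) (G 0) _
      (fun t ht => by simpa using hode 0 hm t ht)
      (hGd 0)
      (fun t ht => by simpa using hGid 0 t ht)
      (fun t ht => by simpa using hnn 0 t ht)
      (fun t ht => le_refl 0)
      (by simp [hG, hy00]; norm_num)
    exact this t ht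
  | succ n ih =>
    intro hm t ht
    have hn : n ≤ k := Nat.le_of_succ_le hm
    have IH := ih hn
    have := step_lemma β hβ (y (n + 1)) (y n) (G n) (G (n + 1)) _
      (fun t ht => by simpa using hode (n + 1) hm t ht)
      (hGd (n + 1))
      (fun t ht => by simpa using hGid (n + 1) t ht)
      (fun t ht => by simpa using hnn (n + 1) t ht)
      (fun t ht => IH t ht)
      (by
        have h1 : G (n + 1) 0 = -1 := by
          simp only [hG]
          rw [hsum0 n]
          simp
        rw [h1]
        linarith [hy0 (n + 1) hm])
    exact this t ht
end

section
/- Let k ∈ ℕ and let δ_0, …, δ_k and θ_0, …, θ_k : [0, ∞) → ℝ be differentiable functions such that δ_0'(t) ≤ −δ_0(t) and δ_m'(t) ≤ δ_{m−1}(t) − δ_m(t) for 1 ≤ m ≤ k and all t ≥ 0, θ_0'(t) = −θ_0(t) and θ_m'(t) = θ_{m−1}(t) − θ_m(t) for 1 ≤ m ≤ k and all t ≥ 0, and δ_m(0) = θ_m(0) for all 0 ≤ m ≤ k. Then δ_m(t) ≤ θ_m(t) for every 0 ≤ m ≤ k and every t ≥ 0. -/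
/-- Helper: if `h 0 = 0` and `h' t ≤ c t - h t` with `c t ≤ 0` on `[0,∞)`,
then `h ≤ 0` on `[0,∞)`. -/
lemma gronwall_aux (h h' c : ℝ → ℝ)
    (hdiff : ∀ t ∈ Set.Ici (0 : ℝ), HasDerivWithinAt h (h' t) (Set.Ici (0 : ℝ)) t)
    (hineq : ∀ t ∈ Set.Ici (0 : ℝ), h' t ≤ c t - h t)
    (hc : ∀ t ∈ Set.Ici (0 : ℝ), c t ≤ 0)
    (h0 : h 0 = 0) :
    ∀ t ∈ Set.Ici (0 : ℝ), h t ≤ 0 := by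
  set u : ℝ → ℝ := fun t => Real.exp t * h t with hu
  have hudiff : ∀ t ∈ Set.Ici (0 : ℝ),
      HasDerivWithinAt u (Real.exp t * (h t + h' t)) (Set.Ici (0 : ℝ)) t := by
    intro t ht
    have := ((Real.hasDerivAt_exp t).hasDerivWithinAt (s := Set.Ici (0:ℝ))).mul
      (hdiff t ht)
    exact this.congr_deriv (by ring)
  have hanti : AntitoneOn u (Set.Ici (0 : ℝ)) := by
    apply antitoneOn_of_deriv_nonpos (convex_Ici 0)
    · exact fun t ht => (hudiff t ht).continuousWithinAt
    · intro t ht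
      rw [interior_Ici] at ht
      exact (((hudiff t (Set.Ioi_subset_Ici_self ht)).hasDerivAt
        (Ici_mem_nhds ht)).differentiableAt).differentiableWithinAt
    · intro t ht
      rw [interior_Ici] at ht
      have hd := (hudiff t (Set.Ioi_subset_Ici_self ht)).hasDerivAt (Ici_mem_nhds ht)
      rw [hd.deriv]
      have h1 : h t + h' t ≤ c t := by have := hineq t (Set.Ioi_subset_Ici_self ht); linarith
      have hcle := hc t (Set.Ioi_subset_Ici_self ht)
      have := (Real.exp_pos t).le
      nlinarith
  intro t ht
  have := hanti (Set.self_mem_Ici) ht ht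
  simp only [hu, h0, Real.exp_zero, one_mul, mul_zero] at this
  have hpos := Real.exp_pos t
  nlinarith

/-- comparison principle on `[0, ∞)`: solutions of the
differential inequalities `δ_0' ≤ −δ_0`, `δ_m' ≤ δ_{m−1} − δ_m` are dominated by
the solution of the corresponding equalities with the same initial data. -/
theorem ode_comparison
    (k : ℕ) (δ θ δ' : ℕ → ℝ → ℝ)
    (hδdiff : ∀ m ≤ k, ∀ t ∈ Set.Ici (0 : ℝ),
      HasDerivWithinAt (δ m) (δ' m t) (Set.Ici (0 : ℝ)) t)
    (hδ0 : ∀ t ∈ Set.Ici (0 : ℝ), δ' 0 t ≤ -(δ 0 t))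
    (hδm : ∀ m : ℕ, 1 ≤ m → m ≤ k → ∀ t ∈ Set.Ici (0 : ℝ),
      δ' m t ≤ δ (m - 1) t - δ m t)
    (hθ0 : ∀ t ∈ Set.Ici (0 : ℝ),
      HasDerivWithinAt (θ 0) (-(θ 0 t)) (Set.Ici (0 : ℝ)) t)
    (hθm : ∀ m : ℕ, 1 ≤ m → m ≤ k → ∀ t ∈ Set.Ici (0 : ℝ),
      HasDerivWithinAt (θ m) (θ (m - 1) t - θ m t) (Set.Ici (0 : ℝ)) t)
    (hinit : ∀ m ≤ k, δ m 0 = θ m 0) :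
    ∀ m ≤ k, ∀ t ∈ Set.Ici (0 : ℝ), δ m t ≤ θ m t := by
  intro m
  induction m with
  | zero =>
    intro hm t ht
    have key := gronwall_aux (fun t => δ 0 t - θ 0 t)
      (fun t => δ' 0 t + θ 0 t) (fun _ => 0)
      (fun t ht => by
        have := (hδdiff 0 hm t ht).sub (hθ0 t ht)
        exact this.congr_deriv (by ring))
      (fun t ht => by have := hδ0 t ht; linarith)
      (fun t _ => le_refl 0)
      (by simp [hinit 0 hm])
    have ht2 := key t ht
    linarith
  | succ n ih =>
    intro hm t ht
    have hn : n ≤ k := Nat.le_of_succ_le hm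
    have h1 : 1 ≤ n + 1 := Nat.le_add_left 1 n
    have key := gronwall_aux (fun t => δ (n+1) t - θ (n+1) t)
      (fun t => δ' (n+1) t - (θ n t - θ (n+1) t))
      (fun t => δ n t - θ n t)
      (fun t ht => by
        have := (hδdiff (n+1) hm t ht).sub (hθm (n+1) h1 hm t ht)
        exact this)
      (fun t ht => by
        have := hδm (n+1) h1 hm t ht
        simp only [Nat.add_sub_cancel] at this
        linarith)
      (fun t ht => by have := ih hn t ht; linarith)
      (by simp [hinit (n+1) hm])
    have ht2 := key t ht
    linarith
end
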